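/- arXiv:1205.4603 — 3 statements merged into one kernel-verified Lean document; each statement's English description precedes it below -/
import Mathlib

section
/- Let p be a prime and let 3 ≤ r < s be integers, and set q = (s-1)/(r-1). Let a ∈ A(s,r) satisfy h_p(a) = min h_p and write d = (d_1,…,d_{r-1}) = δ(a) (so d ∈ Biv(s,r)). If d_1 = [q+1] or d_{r-1} = [q+1], then d = ([q], [q+1], [q+1], …, [q+1]) or d = ([q+1], [q+1], …, [q+1], [q]). -/
/-- `A(s,r)`: admissible exponent tuples, viewed as functions `ℕ → ℤ` whose relevant
entries are indices `0,…,r-1`: strictly increasing with `a 0 = 0` and `a (r-1) = s-1`. -/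
def Admissible (s r : ℕ) (a : ℕ → ℤ) : Prop :=
  a 0 = 0 ∧ a (r - 1) = (s : ℤ) - 1 ∧ ∀ i, i + 1 < r → a i < a (i + 1)

/-- `h_p(x) = Σ_{k<i≤r} p^{-(x_i - x_k)}` (indices `0,…,r-1`). -/
noncomputable def hp (p r : ℕ) (a : ℕ → ℤ) : ℝ :=
  ∑ k ∈ Finset.range r, ∑ i ∈ Finset.range r,
    if k < i then (p : ℝ) ^ (a k - a i) else 0

/-- `a` is admissible and attains `min h_p` over `A(s,r)`. -/
def IsMinimizer (p s r : ℕ) (a : ℕ → ℤ) : Prop :=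
  Admissible s r a ∧ ∀ b : ℕ → ℤ, Admissible s r b → hp p r a ≤ hp p r b

/-- The delta vector of `a`: `δ_j(a) = a_{j+1} - a_j`, relevant for `j = 0,…,r-2`. -/
def dlt (a : ℕ → ℤ) (j : ℕ) : ℤ := a (j + 1) - a j

namespace S9

variable {p r s : ℕ} {a : ℕ → ℤ}


noncomputable def lam (p : ℕ) (a : ℕ → ℤ) (t : ℕ) : ℝ :=
  ∑ k ∈ Finset.range t, (p : ℝ) ^ (a k - a (t - 1))

noncomputable def rho (p r : ℕ) (a : ℕ → ℤ) (t : ℕ) : ℝ :=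
  ∑ i ∈ Finset.Ico (t + 1) r, (p : ℝ) ^ (a (t + 1) - a i)

variable {p r : ℕ} {a : ℕ → ℤ}

lemma hx1 (hx : (2:ℝ) ≤ (p:ℝ)) : (1:ℝ) < (p:ℝ) := lt_of_lt_of_le one_lt_two hx
lemma hx0 (hx : (2:ℝ) ≤ (p:ℝ)) : (0:ℝ) < (p:ℝ) := lt_trans one_pos (hx1 hx)
lemma hxne (hx : (2:ℝ) ≤ (p:ℝ)) : (p:ℝ) ≠ 0 := ne_of_gt (hx0 hx)

lemma zp_pos (hx : (2:ℝ) ≤ (p:ℝ)) (z : ℤ) : 0 < (p:ℝ) ^ z := zpow_pos (hx0 hx) z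

lemma zp_half (hx : (2:ℝ) ≤ (p:ℝ)) (g : ℤ) (hg : 1 ≤ g) : (p:ℝ) ^ (-g) ≤ 1/2 := by
  calc (p:ℝ) ^ (-g) ≤ (p:ℝ)^(-1 : ℤ) := zpow_le_zpow_right₀ (le_of_lt (hx1 hx)) (by omega)
  _ = ((p:ℝ))⁻¹ := zpow_neg_one _
  _ ≤ 1/2 := by
    rw [one_div]
    exact inv_anti₀ two_pos hx

lemma lam_pos (hx : (2:ℝ) ≤ (p:ℝ)) (t : ℕ) (ht : 1 ≤ t) : 0 < lam p a t := by
  apply Finset.sum_pos (fun i _ => zp_pos hx _)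
  exact ⟨0, Finset.mem_range.2 ht⟩

lemma lam_one : lam p a 1 = 1 := by simp [lam]

lemma lam_ge_one (hx : (2:ℝ) ≤ (p:ℝ)) (t : ℕ) (ht : 1 ≤ t) : 1 ≤ lam p a t := by
  have h := Finset.single_le_sum (f := fun k => (p:ℝ) ^ (a k - a (t-1)))
    (fun i _ => le_of_lt (zp_pos hx _)) (Finset.mem_range.2 (by omega : t - 1 < t))
  simpa [lam] using h

lemma rho_ge_one (hx : (2:ℝ) ≤ (p:ℝ)) (t : ℕ) (ht : t + 2 ≤ r) : 1 ≤ rho p r a t := by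
  have hmem : t + 1 ∈ Finset.Ico (t+1) r := Finset.mem_Ico.2 ⟨le_refl _, by omega⟩
  have h := Finset.single_le_sum (f := fun i => (p:ℝ) ^ (a (t+1) - a i))
    (fun i _ => le_of_lt (zp_pos hx _)) hmem
  simpa [rho] using h

lemma rho_pos (hx : (2:ℝ) ≤ (p:ℝ)) (t : ℕ) (ht : t + 2 ≤ r) : 0 < rho p r a t :=
  lt_of_lt_of_le one_pos (rho_ge_one hx t ht)

lemma lam_rec (hx : (2:ℝ) ≤ (p:ℝ)) (u : ℕ) :
    lam p a (u + 2) = 1 + (p:ℝ) ^ (-(dlt a u)) * lam p a (u + 1) := by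
  have key : ∀ k, (p:ℝ) ^ (a k - a (u+1)) = (p:ℝ) ^ (-(dlt a u)) * (p:ℝ) ^ (a k - a u) := by
    intro k
    rw [← zpow_add₀ (hxne hx)]
    congr 1
    simp only [dlt]; ring
  unfold lam
  rw [show u + 2 - 1 = u + 1 by omega, show u + 1 - 1 = u by omega]
  rw [Finset.sum_range_succ, sub_self, zpow_zero]
  rw [Finset.sum_congr rfl (fun k _ => key k), ← Finset.mul_sum]
  ring

lemma rho_last (hr : 3 ≤ r) : rho p r a (r - 2) = 1 := by
  unfold rho
  rw [show r - 2 + 1 = r - 1 by omega]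
  have h2 : Finset.Ico (r-1) r = {r-1} := by
    ext i; simp [Finset.mem_Ico]; omega
  rw [h2, Finset.sum_singleton, sub_self, zpow_zero]

lemma rho_rec (hx : (2:ℝ) ≤ (p:ℝ)) (t : ℕ) (ht : t + 3 ≤ r) :
    rho p r a t = 1 + (p:ℝ) ^ (-(dlt a (t+1))) * rho p r a (t + 1) := by
  have key : ∀ i, (p:ℝ) ^ (a (t+1) - a i) = (p:ℝ) ^ (-(dlt a (t+1))) * (p:ℝ) ^ (a (t+1+1) - a i) := by
    intro i
    rw [← zpow_add₀ (hxne hx)]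
    congr 1
    simp only [dlt]; ring
  unfold rho
  rw [Finset.sum_eq_sum_Ico_succ_bot (by omega : t + 1 < r)]
  rw [sub_self, zpow_zero]
  congr 1
  rw [Finset.sum_congr rfl (fun i _ => key i), ← Finset.mul_sum]

lemma aux_inv (y : ℝ) (hy : 1 - y ≠ 0) : 1 + y * (1 - y)⁻¹ = (1 - y)⁻¹ := by
  field_simp
  ring

lemma lam_bound (hx : (2:ℝ) ≤ (p:ℝ)) (g : ℤ) (hg : 1 ≤ g) :
    ∀ t, 1 ≤ t → (∀ j, j + 2 ≤ t → g ≤ dlt a j) → lam p a t < (1 - (p:ℝ) ^ (-g))⁻¹ := by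
  have hyl : (0:ℝ) < (p:ℝ)^(-g) := zp_pos hx _
  have hy : (p:ℝ) ^ (-g) ≤ 1/2 := zp_half hx g hg
  have hpos : (0:ℝ) < 1 - (p:ℝ)^(-g) := by linarith
  intro t
  induction t with
  | zero => omega
  | succ n ih =>
    intro _ hgap
    rcases Nat.eq_or_lt_of_le (by omega : 1 ≤ n + 1) with h1 | h1
    · rw [← h1, lam_one, ← one_div, lt_div_iff₀ hpos]
      linarith
    · obtain ⟨u, rfl⟩ : ∃ u, n = u + 1 := ⟨n - 1, by omega⟩
      rw [lam_rec hx]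
      have ihu := ih (by omega) (fun j hj => hgap j (by omega))
      have hmono : (p:ℝ) ^ (-(dlt a u)) ≤ (p:ℝ)^(-g) :=
        zpow_le_zpow_right₀ (le_of_lt (hx1 hx)) (by
          have := hgap u (by omega); omega)
      have hlam_pos : 0 < lam p a (u+1) := lam_pos hx _ (by omega)
      have hmul : (p:ℝ) ^ (-(dlt a u)) * lam p a (u+1) < (p:ℝ)^(-g) * (1 - (p:ℝ)^(-g))⁻¹ :=
        mul_lt_mul' hmono ihu (le_of_lt hlam_pos) hyl
      have heq := aux_inv ((p:ℝ)^(-g)) (ne_of_gt hpos)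
      linarith

lemma rho_bound (hx : (2:ℝ) ≤ (p:ℝ)) (g : ℤ) (hg : 1 ≤ g) (hr : 3 ≤ r) :
    ∀ k t, t + 2 + k = r → (∀ j, t + 1 ≤ j → j + 2 ≤ r → g ≤ dlt a j) →
      rho p r a t < (1 - (p:ℝ) ^ (-g))⁻¹ := by
  have hyl : (0:ℝ) < (p:ℝ)^(-g) := zp_pos hx _
  have hy : (p:ℝ) ^ (-g) ≤ 1/2 := zp_half hx g hg
  have hpos : (0:ℝ) < 1 - (p:ℝ)^(-g) := by linarith
  intro k
  induction k with
  | zero =>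
    intro t ht _
    have : t = r - 2 := by omega
    rw [this, rho_last hr, ← one_div, lt_div_iff₀ hpos]
    linarith
  | succ n ih =>
    intro t ht hgap
    rw [rho_rec hx t (by omega)]
    have ihn := ih (t+1) (by omega) (fun j h1 h2 => hgap j (by omega) h2)
    have hmono : (p:ℝ) ^ (-(dlt a (t+1))) ≤ (p:ℝ)^(-g) :=
      zpow_le_zpow_right₀ (le_of_lt (hx1 hx)) (by
        have := hgap (t+1) (by omega) (by omega); omega)
    have hrho_pos : 0 < rho p r a (t+1) := rho_pos hx _ (by omega)
    have hmul : (p:ℝ) ^ (-(dlt a (t+1))) * rho p r a (t+1) < (p:ℝ)^(-g) * (1 - (p:ℝ)^(-g))⁻¹ :=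
      mul_lt_mul' hmono ihn (le_of_lt hrho_pos) hyl
    have heq := aux_inv ((p:ℝ)^(-g)) (ne_of_gt hpos)
    linarith


-- decomposition of hp isolating index t
lemma hp_decomp (c : ℕ → ℤ) (t : ℕ) (ht : t < r) :
    hp p r c =
      (∑ k ∈ (Finset.range r).erase t, ∑ i ∈ (Finset.range r).erase t,
        (if k < i then (p:ℝ) ^ (c k - c i) else 0))
      + ((∑ k ∈ Finset.range t, (p:ℝ) ^ (c k - c t))
      + (∑ i ∈ Finset.Ico (t+1) r, (p:ℝ) ^ (c t - c i))) := by
  have htm : t ∈ Finset.range r := Finset.mem_range.2 ht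
  unfold hp
  rw [← Finset.sum_erase_add (Finset.range r) _ htm]
  have hFt : (∑ i ∈ Finset.range r, if t < i then (p:ℝ) ^ (c t - c i) else 0)
      = ∑ i ∈ Finset.Ico (t+1) r, (p:ℝ) ^ (c t - c i) := by
    rw [← Finset.sum_filter]
    congr 1
    ext i; simp [Finset.mem_Ico, Finset.mem_filter]; omega
  have hInner : ∀ k ∈ (Finset.range r).erase t,
      (∑ i ∈ Finset.range r, if k < i then (p:ℝ) ^ (c k - c i) else 0)
      = (if k < t then (p:ℝ) ^ (c k - c t) else 0)
        + ∑ i ∈ (Finset.range r).erase t, (if k < i then (p:ℝ) ^ (c k - c i) else 0) := by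
    intro k hk
    rw [← Finset.sum_erase_add (Finset.range r) _ htm]
    ring
  rw [Finset.sum_congr rfl hInner, Finset.sum_add_distrib]
  have hL : (∑ k ∈ (Finset.range r).erase t, if k < t then (p:ℝ) ^ (c k - c t) else 0)
      = ∑ k ∈ Finset.range t, (p:ℝ) ^ (c k - c t) := by
    rw [← Finset.sum_filter]
    congr 1
    ext k; simp [Finset.mem_filter, Finset.mem_range]; omega
  rw [hL, hFt]
  ring

lemma hp_update (hx : (2:ℝ) ≤ (p:ℝ)) (t : ℕ) (ht1 : 1 ≤ t) (ht2 : t + 2 ≤ r) (z : ℤ) :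
    hp p r (Function.update a t z) - hp p r a
      = ((p:ℝ) ^ (a (t-1) - z) - (p:ℝ) ^ (a (t-1) - a t)) * lam p a t
      + ((p:ℝ) ^ (z - a (t+1)) - (p:ℝ) ^ (a t - a (t+1))) * rho p r a t := by
  have hxne : (p:ℝ) ≠ 0 := by positivity
  set b := Function.update a t z with hb
  have hbt : b t = z := Function.update_self t z a
  have hbk : ∀ k, k ≠ t → b k = a k := fun k hk => Function.update_of_ne hk z a
  rw [hp_decomp (p := p) b t (by omega), hp_decomp (p := p) a t (by omega)]
  have hOFF : (∑ k ∈ (Finset.range r).erase t, ∑ i ∈ (Finset.range r).erase t,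
        (if k < i then (p:ℝ) ^ (b k - b i) else 0))
      = (∑ k ∈ (Finset.range r).erase t, ∑ i ∈ (Finset.range r).erase t,
        (if k < i then (p:ℝ) ^ (a k - a i) else 0)) := by
    apply Finset.sum_congr rfl
    intro k hk
    apply Finset.sum_congr rfl
    intro i hi
    rw [hbk k (Finset.ne_of_mem_erase hk), hbk i (Finset.ne_of_mem_erase hi)]
  have hLb : (∑ k ∈ Finset.range t, (p:ℝ) ^ (b k - b t))
      = (p:ℝ) ^ (a (t-1) - z) * lam p a t := by
    unfold lam
    rw [Finset.mul_sum]
    apply Finset.sum_congr rfl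
    intro k hk
    rw [hbt, hbk k (by simp at hk; omega), ← zpow_add₀ hxne]
    congr 1; ring
  have hLa : (∑ k ∈ Finset.range t, (p:ℝ) ^ (a k - a t))
      = (p:ℝ) ^ (a (t-1) - a t) * lam p a t := by
    unfold lam
    rw [Finset.mul_sum]
    apply Finset.sum_congr rfl
    intro k hk
    rw [← zpow_add₀ hxne]
    congr 1; ring
  have hRb : (∑ i ∈ Finset.Ico (t+1) r, (p:ℝ) ^ (b t - b i))
      = (p:ℝ) ^ (z - a (t+1)) * rho p r a t := by
    unfold rho
    rw [Finset.mul_sum]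
    apply Finset.sum_congr rfl
    intro i hi
    rw [hbt, hbk i (by simp [Finset.mem_Ico] at hi; omega), ← zpow_add₀ hxne]
    congr 1; ring
  have hRa : (∑ i ∈ Finset.Ico (t+1) r, (p:ℝ) ^ (a t - a i))
      = (p:ℝ) ^ (a t - a (t+1)) * rho p r a t := by
    unfold rho
    rw [Finset.mul_sum]
    apply Finset.sum_congr rfl
    intro i hi
    rw [← zpow_add₀ hxne]
    congr 1; ring
  rw [hOFF, hLb, hLa, hRb, hRa]
  ring

lemma admissible_update (hA : Admissible s r a) (t : ℕ) (ht1 : 1 ≤ t) (ht2 : t + 2 ≤ r)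
    (z : ℤ) (hz1 : a (t-1) < z) (hz2 : z < a (t+1)) :
    Admissible s r (Function.update a t z) := by
  obtain ⟨h0, hend, hmono⟩ := hA
  refine ⟨?_, ?_, ?_⟩
  · rw [Function.update_of_ne (by omega) z a]; exact h0
  · rw [Function.update_of_ne (by omega) z a]; exact hend
  · intro i hi
    rcases eq_or_ne i t with rfl | hit
    · rw [Function.update_self, Function.update_of_ne (by omega) z a]
      exact hz2
    · rcases eq_or_ne (i+1) t with he | hne
      · rw [Function.update_of_ne hit z a, he, Function.update_self]
        have : i = t - 1 := by omega
        rw [this]; exact hz1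
      · rw [Function.update_of_ne hit z a, Function.update_of_ne hne z a]
        exact hmono i hi

lemma min_ineq (hx : (2:ℝ) ≤ (p:ℝ)) (hm : IsMinimizer p s r a)
    (t : ℕ) (ht1 : 1 ≤ t) (ht2 : t + 2 ≤ r)
    (z : ℤ) (hz1 : a (t-1) < z) (hz2 : z < a (t+1)) :
    0 ≤ ((p:ℝ) ^ (a (t-1) - z) - (p:ℝ) ^ (a (t-1) - a t)) * lam p a t
      + ((p:ℝ) ^ (z - a (t+1)) - (p:ℝ) ^ (a t - a (t+1))) * rho p r a t := by
  rw [← hp_update hx t ht1 ht2 z]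
  have := hm.2 _ (admissible_update hm.1 t ht1 ht2 z hz1 hz2)
  linarith


lemma dlt_ge_one (hA : Admissible s r a) (j : ℕ) (hj : j + 2 ≤ r) : 1 ≤ dlt a j := by
  have := hA.2.2 j (by omega)
  unfold dlt; omega

lemma lam_lt_two (hx : (2:ℝ) ≤ (p:ℝ)) (hA : Admissible s r a) (t : ℕ)
    (ht1 : 1 ≤ t) (ht2 : t ≤ r - 1) : lam p a t < 2 := by
  have h1 := lam_bound (a := a) hx 1 le_rfl t ht1
    (fun j hj => dlt_ge_one (r := r) (s := s) hA j (by omega))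
  have hy : (p:ℝ) ^ (-1:ℤ) ≤ 1/2 := zp_half hx 1 le_rfl
  have hy0 : (0:ℝ) < (p:ℝ) ^ (-1:ℤ) := zp_pos hx _
  have h2 : (1 - (p:ℝ) ^ (-1:ℤ))⁻¹ ≤ 2 := by
    rw [inv_le_iff_one_le_mul₀ (by linarith)]
    linarith
  linarith

lemma rho_lt_two (hx : (2:ℝ) ≤ (p:ℝ)) (hA : Admissible s r a) (t : ℕ)
    (ht : t + 2 ≤ r) (hr3 : 3 ≤ r) : rho p r a t < 2 := by
  have hy : (p:ℝ) ^ (-1:ℤ) ≤ 1/2 := zp_half hx 1 le_rfl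
  have hy0 : (0:ℝ) < (p:ℝ) ^ (-1:ℤ) := zp_pos hx _
  have h2 : (1 - (p:ℝ) ^ (-1:ℤ))⁻¹ ≤ 2 := by
    rw [inv_le_iff_one_le_mul₀ (by linarith)]
    linarith
  have h1 := rho_bound (r := r) (a := a) hx 1 le_rfl hr3 (r - 2 - t) t (by omega)
    (fun j hj1 hj2 => dlt_ge_one hA j (by omega))
  linarith


-- swap condition, descent form
lemma swap_descent (hx : (2:ℝ) ≤ (p:ℝ)) (hm : IsMinimizer p s r a)
    (t : ℕ) (ht1 : 1 ≤ t) (ht2 : t + 2 ≤ r)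
    (hd : dlt a t < dlt a (t-1)) :
    rho p r a t ≤ lam p a t := by
  have hA := hm.1
  have hd1 : a (t-1) < a t := by
    have := hA.2.2 (t-1) (by omega)
    rwa [show t - 1 + 1 = t by omega] at this
  have hd2 : a t < a (t+1) := hA.2.2 t (by omega)
  set z : ℤ := a (t-1) + a (t+1) - a t with hz
  have h0 := min_ineq hx hm t ht1 ht2 z (by omega) (by omega)
  have e1 : a (t-1) - z = a t - a (t+1) := by rw [hz]; ring
  have e2 : z - a (t+1) = a (t-1) - a t := by rw [hz]; ring
  rw [e1, e2] at h0
  have hC : (0:ℝ) < (p:ℝ) ^ (a t - a (t+1)) - (p:ℝ) ^ (a (t-1) - a t) := by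
    have : (p:ℝ) ^ (a (t-1) - a t) < (p:ℝ) ^ (a t - a (t+1)) := by
      apply zpow_lt_zpow_right₀ (by linarith : (1:ℝ) < (p:ℝ))
      unfold dlt at hd
      rw [show t - 1 + 1 = t by omega] at hd
      omega
    linarith
  have h0' : 0 ≤ ((p:ℝ) ^ (a t - a (t+1)) - (p:ℝ) ^ (a (t-1) - a t))
      * (lam p a t - rho p r a t) := by linarith [h0]; 
  nlinarith [h0', hC]

lemma swap_ascent (hx : (2:ℝ) ≤ (p:ℝ)) (hm : IsMinimizer p s r a)
    (t : ℕ) (ht1 : 1 ≤ t) (ht2 : t + 2 ≤ r)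
    (hd : dlt a (t-1) < dlt a t) :
    lam p a t ≤ rho p r a t := by
  have hA := hm.1
  have hd1 : a (t-1) < a t := by
    have := hA.2.2 (t-1) (by omega)
    rwa [show t - 1 + 1 = t by omega] at this
  have hd2 : a t < a (t+1) := hA.2.2 t (by omega)
  set z : ℤ := a (t-1) + a (t+1) - a t with hz
  have h0 := min_ineq hx hm t ht1 ht2 z (by omega) (by omega)
  have e1 : a (t-1) - z = a t - a (t+1) := by rw [hz]; ring
  have e2 : z - a (t+1) = a (t-1) - a t := by rw [hz]; ring
  rw [e1, e2] at h0
  have hC : (0:ℝ) < (p:ℝ) ^ (a (t-1) - a t) - (p:ℝ) ^ (a t - a (t+1)) := by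
    have : (p:ℝ) ^ (a t - a (t+1)) < (p:ℝ) ^ (a (t-1) - a t) := by
      apply zpow_lt_zpow_right₀ (by linarith : (1:ℝ) < (p:ℝ))
      unfold dlt at hd
      rw [show t - 1 + 1 = t by omega] at hd
      omega
    linarith
  have h0' : 0 ≤ ((p:ℝ) ^ (a (t-1) - a t) - (p:ℝ) ^ (a t - a (t+1)))
      * (rho p r a t - lam p a t) := by linarith [h0]
  nlinarith [h0', hC]

lemma step_up (hx : (2:ℝ) ≤ (p:ℝ)) (hm : IsMinimizer p s r a)
    (t : ℕ) (ht1 : 1 ≤ t) (ht2 : t + 2 ≤ r) :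
    dlt a t ≤ dlt a (t-1) + 1 := by
  by_contra hcon
  push_neg at hcon
  have hA := hm.1
  have hg1 : 1 ≤ dlt a (t-1) := dlt_ge_one hA (t-1) (by omega)
  have hd1 : a (t-1) < a t := by
    have := hA.2.2 (t-1) (by omega); rwa [show t - 1 + 1 = t by omega] at this
  have hdt : 3 ≤ dlt a t := by omega
  have hz2 : a t + 1 < a (t+1) := by unfold dlt at hdt; omega
  have h0 := min_ineq hx hm t ht1 ht2 (a t + 1) (by omega) hz2
  set x : ℝ := (p:ℝ) with hxdef
  have hx1 : (1:ℝ) < x := by rw [hxdef]; linarith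
  have hx0 : (0:ℝ) < x := by linarith
  set L := lam p a t with hL
  set R := rho p r a t with hR
  set e1 : ℤ := a (t-1) - a t with he1
  set e2 : ℤ := a t - a (t+1) with he2
  have hxne : x ≠ 0 := ne_of_gt hx0
  have r1 : x ^ (a (t-1) - (a t + 1)) = x ^ e1 * x ^ (-1 : ℤ) := by
    rw [← zpow_add₀ hxne]; congr 1; rw [he1]; ring
  have r2 : x ^ (a t + 1 - a (t+1)) = x ^ e2 * x := by
    rw [show a t + 1 - a (t+1) = e2 + 1 by rw [he2]; ring, zpow_add₀ hxne, zpow_one]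
  rw [r1, r2] at h0
  -- h0 : 0 ≤ (x^e1 * x⁻ - x^e1) L + (x^e2 * x - x^e2) R
  have hxi : x ^ (-1:ℤ) * x = 1 := by
    rw [zpow_neg_one]; field_simp
  have hP1 : (0:ℝ) < x ^ e1 := zp_pos hx e1
  have hP2 : (0:ℝ) < x ^ e2 := zp_pos hx e2
  have heq : (x ^ e1 * x ^ (-1:ℤ) - x ^ e1) * L + (x ^ e2 * x - x ^ e2) * R
      = (x - 1) * (x ^ e2 * R - x ^ e1 * x ^ (-1:ℤ) * L) := by
    linear_combination (x ^ e1 * L) * hxi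
  rw [heq] at h0
  have key : x ^ e1 * x ^ (-1:ℤ) * L ≤ x ^ e2 * R := by
    nlinarith [h0]
  -- multiply by x twice
  have key2 : x ^ e1 * L ≤ x ^ e2 * x * R := by
    have := mul_le_mul_of_nonneg_left key (le_of_lt hx0)
    calc x ^ e1 * L = x * (x ^ e1 * x ^ (-1:ℤ) * L) := by
          linear_combination (x ^ e1 * L) * hxi.symm
    _ ≤ x * (x ^ e2 * R) := this
    _ = x ^ e2 * x * R := by ring
  have hcomp : x ^ e2 * x * x ≤ x ^ e1 := by
    have h1 : e2 + 2 ≤ e1 := by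
      rw [he1, he2]; unfold dlt at hcon
      rw [show t - 1 + 1 = t by omega] at hcon
      omega
    have h2 : x ^ (e2 + 2) ≤ x ^ e1 := zpow_le_zpow_right₀ (le_of_lt hx1) h1
    calc x ^ e2 * x * x = x ^ (e2 + 2) := by
          rw [zpow_add₀ hxne, zpow_two]; ring
    _ ≤ x ^ e1 := h2
  have hL1 : (1:ℝ) ≤ L := lam_ge_one hx t ht1
  have hR2 : R < 2 := rho_lt_two hx hA t ht2 (by omega)
  have hR0 : (0:ℝ) < R := by linarith [rho_ge_one (a := a) hx t ht2]
  -- chain: x^e1 ≤ x^e1 L ≤ x^e2 x R < x^e2 x 2 ≤ x^e2 x x ≤ x^e1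
  have c1 : x ^ e1 ≤ x ^ e1 * L := le_mul_of_one_le_right (le_of_lt hP1) hL1
  have c3 : x ^ e2 * x * R < x ^ e2 * x * 2 := by
    have : (0:ℝ) < x ^ e2 * x := by positivity
    exact (mul_lt_mul_iff_right₀ this).2 hR2
  have c4 : x ^ e2 * x * 2 ≤ x ^ e2 * x * x := by
    have : (0:ℝ) < x ^ e2 * x := by positivity
    exact (mul_le_mul_iff_right₀ this).2 hx
  linarith

lemma step_down (hx : (2:ℝ) ≤ (p:ℝ)) (hm : IsMinimizer p s r a)
    (t : ℕ) (ht1 : 1 ≤ t) (ht2 : t + 2 ≤ r) :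
    dlt a (t-1) ≤ dlt a t + 1 := by
  by_contra hcon
  push_neg at hcon
  unfold dlt at hcon
  rw [show t - 1 + 1 = t by omega] at hcon
  have hA := hm.1
  have hg1 : 1 ≤ dlt a t := dlt_ge_one hA t (by omega)
  unfold dlt at hg1
  have hz1 : a (t-1) < a t - 1 := by omega
  have h0 := min_ineq hx hm t ht1 ht2 (a t - 1) hz1 (by omega)
  set x : ℝ := (p:ℝ) with hxdef
  have hx1 : (1:ℝ) < x := by rw [hxdef]; linarith
  have hx0 : (0:ℝ) < x := by linarith
  set L := lam p a t with hL
  set R := rho p r a t with hR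
  set e1 : ℤ := a (t-1) - a t with he1
  set e2 : ℤ := a t - a (t+1) with he2
  have hxne : x ≠ 0 := ne_of_gt hx0
  have r1 : x ^ (a (t-1) - (a t - 1)) = x ^ e1 * x := by
    rw [show a (t-1) - (a t - 1) = e1 + 1 by rw [he1]; ring, zpow_add₀ hxne, zpow_one]
  have r2 : x ^ (a t - 1 - a (t+1)) = x ^ e2 * x ^ (-1:ℤ) := by
    rw [show a t - 1 - a (t+1) = e2 + (-1) by rw [he2]; ring, zpow_add₀ hxne]
  rw [r1, r2] at h0
  have hxi : x ^ (-1:ℤ) * x = 1 := by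
    rw [zpow_neg_one]; field_simp
  have hP1 : (0:ℝ) < x ^ e1 := zp_pos hx e1
  have hP2 : (0:ℝ) < x ^ e2 := zp_pos hx e2
  have heq : (x ^ e1 * x - x ^ e1) * L + (x ^ e2 * x ^ (-1:ℤ) - x ^ e2) * R
      = (x - 1) * (x ^ e1 * L - x ^ e2 * x ^ (-1:ℤ) * R) := by
    linear_combination (x ^ e2 * R) * hxi
  rw [heq] at h0
  have key : x ^ e2 * x ^ (-1:ℤ) * R ≤ x ^ e1 * L := by
    nlinarith [h0]
  have key2 : x ^ e2 * R ≤ x ^ e1 * x * L := by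
    have := mul_le_mul_of_nonneg_left key (le_of_lt hx0)
    calc x ^ e2 * R = x * (x ^ e2 * x ^ (-1:ℤ) * R) := by
          linear_combination (x ^ e2 * R) * hxi.symm
    _ ≤ x * (x ^ e1 * L) := this
    _ = x ^ e1 * x * L := by ring
  have hcomp : x ^ e1 * x * x ≤ x ^ e2 := by
    have h1 : e1 + 2 ≤ e2 := by rw [he1, he2]; omega
    have h2 : x ^ (e1 + 2) ≤ x ^ e2 := zpow_le_zpow_right₀ (le_of_lt hx1) h1
    calc x ^ e1 * x * x = x ^ (e1 + 2) := by
          rw [zpow_add₀ hxne, zpow_two]; ring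
    _ ≤ x ^ e2 := h2
  have hR1 : (1:ℝ) ≤ R := rho_ge_one hx t ht2
  have hL2 : L < 2 := lam_lt_two hx hA t ht1 (by omega)
  -- chain: x^e2 ≤ x^e2 R ≤ x^e1 x L < x^e1 x 2 ≤ x^e1 x x ≤ x^e2
  have c1 : x ^ e2 ≤ x ^ e2 * R := le_mul_of_one_le_right (le_of_lt hP2) hR1
  have c3 : x ^ e1 * x * L < x ^ e1 * x * 2 := by
    have : (0:ℝ) < x ^ e1 * x := by positivity
    exact (mul_lt_mul_iff_right₀ this).2 hL2
  have c4 : x ^ e1 * x * 2 ≤ x ^ e1 * x * x := by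
    have : (0:ℝ) < x ^ e1 * x := by positivity
    exact (mul_le_mul_iff_right₀ this).2 hx
  linarith



lemma lam_unroll (hx : (2:ℝ) ≤ (p:ℝ)) (m : ℤ) (t : ℕ) (ht : 1 ≤ t) :
    ∀ j, (∀ i, t ≤ i → i < t + j → dlt a i = m) →
    lam p a (t + 1 + j) = (∑ i ∈ Finset.range j, ((p:ℝ) ^ (-m)) ^ i)
      + ((p:ℝ) ^ (-m)) ^ j * lam p a (t + 1) := by
  intro j
  induction j with
  | zero => intro _; simp
  | succ j ih =>
    intro hgaps
    have h1 : t + 1 + (j + 1) = (t + j) + 2 := by omega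
    rw [h1, lam_rec hx (t + j)]
    have h2 : dlt a (t + j) = m := hgaps (t + j) (by omega) (by omega)
    have h3 : (t + j) + 1 = t + 1 + j := by omega
    rw [h2, h3, ih (fun i hi1 hi2 => hgaps i hi1 (by omega))]
    rw [geom_sum_succ]
    ring

lemma rho_unroll (hx : (2:ℝ) ≤ (p:ℝ)) (m : ℤ) :
    ∀ j t, t + j + 2 ≤ r → (∀ i, t < i → i ≤ t + j → dlt a i = m) →
    rho p r a t = (∑ i ∈ Finset.range j, ((p:ℝ) ^ (-m)) ^ i)
      + ((p:ℝ) ^ (-m)) ^ j * rho p r a (t + j) := by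
  intro j
  induction j with
  | zero => intro t _ _; simp
  | succ j ih =>
    intro t hr hgaps
    rw [rho_rec hx t (by omega)]
    have h2 : dlt a (t + 1) = m := hgaps (t + 1) (by omega) (by omega)
    have h3 : t + 1 + j = t + (j + 1) := by omega
    rw [h2, ih (t + 1) (by omega) (fun i hi1 hi2 => hgaps i (by omega) (by omega)), h3]
    rw [geom_sum_succ]
    ring

lemma e2_arith (u v w1 N A B : ℝ) (hu0 : 0 < u) (hu2 : u ≤ 1/2)
    (hv0 : 0 < v) (hv2 : v ≤ 1/2)
    (hw1 : w1 ≤ u) (hw0 : 0 < w1)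
    (hgeom : N * (u - 1) = w1 - 1)
    (h1 : N + (w1 * v) * B ≤ A) (h2 : N + (w1 * v) * A ≤ B)
    (hAC : A * (1 - u * v) < 1) : False := by
  have hu1 : u < 1 := by linarith
  have hN1 : 1 ≤ N := by nlinarith
  have hK0 : 0 < w1 * v := mul_pos hw0 hv0
  have hK4 : w1 * v ≤ 1/4 := by nlinarith
  have h3 : N * (1 + w1 * v) ≤ A * (1 - (w1*v) * (w1*v)) := by nlinarith
  have h4 : N ≤ A * (1 - w1 * v) := by nlinarith
  have hkey : (1-u) * (N * (1 - u*v) - (1 - w1 * v)) = (u - w1) * (1 - v) := by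
    linear_combination (-(1 - u*v)) * hgeom
  have h5 : 1 - w1 * v ≤ N * (1 - u*v) := by nlinarith
  have hCpos : (0:ℝ) < 1 - u*v := by nlinarith
  nlinarith [mul_le_mul_of_nonneg_right h4 hCpos.le,
    mul_lt_mul_of_pos_right hAC (by nlinarith : (0:ℝ) < 1 - w1 * v)]

lemma main_case (hx : (2:ℝ) ≤ (p:ℝ)) (hr : 3 ≤ r)
    (fq : ℤ) (hfq1 : 1 ≤ fq)
    (hub : (s:ℤ) - 1 ≤ ((r:ℤ) - 1) * fq + ((r:ℤ) - 2))
    (hm : IsMinimizer p s r a)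
    (h0 : dlt a 0 = fq + 1) :
    ∀ j, j < r - 1 → dlt a j = if j = r - 2 then fq else fq + 1 := by
  have hA := hm.1
  have hx0 : (0:ℝ) < (p:ℝ) := by linarith
  have hxne : (p:ℝ) ≠ 0 := ne_of_gt hx0
  have hu0 : (0:ℝ) < (p:ℝ) ^ (-fq) := zp_pos hx _
  have hv0 : (0:ℝ) < (p:ℝ) ^ (-1:ℤ) := zp_pos hx _
  have hu2 : (p:ℝ) ^ (-fq) ≤ 1/2 := zp_half hx fq hfq1
  have hv2 : (p:ℝ) ^ (-1:ℤ) ≤ 1/2 := zp_half hx 1 le_rfl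
  have huv : (p:ℝ) ^ (-(fq+1)) = (p:ℝ) ^ (-fq) * (p:ℝ) ^ (-1:ℤ) := by
    rw [← zpow_add₀ hxne]; congr 1; ring
  have hCpos : (0:ℝ) < 1 - (p:ℝ) ^ (-fq) * (p:ℝ) ^ (-1:ℤ) := by nlinarith
  have huv4 : (p:ℝ) ^ (-fq) * (p:ℝ) ^ (-1:ℤ) ≤ 1/4 := by nlinarith
  have hC1 : (1 - (p:ℝ) ^ (-fq) * (p:ℝ) ^ (-1:ℤ))⁻¹ ≤ 1 + (p:ℝ) ^ (-fq) := by
    rw [inv_le_iff_one_le_mul₀ hCpos]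
    nlinarith [mul_le_mul_of_nonneg_left huv4 hu0.le,
      mul_le_mul_of_nonneg_left hv2 hu0.le]
  -- Claim E
  have hE : ∀ i, i + 3 ≤ r → fq + 1 ≤ dlt a i := by
    by_contra hcon
    push_neg at hcon
    classical
    obtain ⟨τ, hτr, hτval, hprefix⟩ :
        ∃ τ, τ + 3 ≤ r ∧ dlt a τ < fq + 1 ∧ ∀ i, i < τ → fq + 1 ≤ dlt a i := by
      refine ⟨Nat.find hcon, (Nat.find_spec hcon).1, (Nat.find_spec hcon).2, ?_⟩
      intro i hi
      have h1 := Nat.find_min hcon hi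
      push_neg at h1
      have h2 := (Nat.find_spec hcon).1
      exact h1 (by omega)
    have hτ1 : 1 ≤ τ := by
      rcases Nat.eq_zero_or_pos τ with h | h
      · rw [h] at hτval; omega
      · exact h
    obtain ⟨τ', rfl⟩ : ∃ τ', τ = τ' + 1 := ⟨τ - 1, by omega⟩
    have hdpre : dlt a τ' = fq + 1 := by
      have h1 : fq + 1 ≤ dlt a τ' := hprefix τ' (by omega)
      have h2 := step_down (s := s) hx hm (τ'+1) (by omega) (by omega)
      simp only [Nat.add_sub_cancel] at h2
      omega
    have hdτ : dlt a (τ'+1) = fq := by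
      have h2 := step_down (s := s) hx hm (τ'+1) (by omega) (by omega)
      simp only [Nat.add_sub_cancel] at h2
      have h1 : fq + 1 ≤ dlt a τ' := hprefix τ' (by omega)
      omega
    -- the run of fq's
    have hrunex : ∃ j, τ'+1 ≤ j ∧ (j + 3 ≤ r → dlt a (j+1) ≠ fq) :=
      ⟨r - 2, by omega, fun h => absurd h (by omega)⟩
    obtain ⟨w, hwτ1, hwP', hwub, hwmin⟩ :
        ∃ w, τ'+1 ≤ w ∧ (w + 3 ≤ r → dlt a (w+1) ≠ fq) ∧ w ≤ r - 2 ∧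
          ∀ j, τ'+1 ≤ j → j < w → dlt a (j+1) = fq := by
      refine ⟨Nat.find hrunex, (Nat.find_spec hrunex).1, (Nat.find_spec hrunex).2,
        Nat.find_le ⟨by omega, fun h => absurd h (by omega)⟩, ?_⟩
      intro j hj1 hj2
      have h1 := Nat.find_min hrunex hj2
      push_neg at h1
      exact (h1 hj1).2
    have hrun : ∀ i, τ'+1 ≤ i → i ≤ w → dlt a i = fq := by
      intro i hi1 hi2
      rcases Nat.eq_or_lt_of_le hi1 with h | h
      · rw [← h]; exact hdτ
      · obtain ⟨j, rfl⟩ : ∃ j, i = j + 1 := ⟨i - 1, by omega⟩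
        exact hwmin j (by omega) (by omega)
    -- bound on lam τ
    have hlamτ : lam p a (τ'+1) * (1 - (p:ℝ) ^ (-fq) * (p:ℝ) ^ (-1:ℤ)) < 1 := by
      have h1 := lam_bound (a := a) hx (fq+1) (by omega) (τ'+1) (by omega)
        (fun j hj => hprefix j (by omega))
      rw [huv] at h1
      have h2 := mul_lt_mul_of_pos_right h1 hCpos
      rwa [inv_mul_cancel₀ (ne_of_gt hCpos)] at h2
    have hlam1 : (1:ℝ) ≤ lam p a (τ'+1) := lam_ge_one hx (τ'+1) (by omega)
    -- descent at τ
    have hdesc : rho p r a (τ'+1) ≤ lam p a (τ'+1) := by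
      apply swap_descent hx hm (τ'+1) (by omega) (by omega)
      simp only [Nat.add_sub_cancel]
      omega
    -- final contradiction if rho τ ≥ 1 + u :
    have hfinal : ¬ (1 + (p:ℝ) ^ (-fq) ≤ rho p r a (τ'+1)) := by
      intro hge
      have h1 : (1 - (p:ℝ) ^ (-fq) * (p:ℝ) ^ (-1:ℤ))⁻¹
          * (1 - (p:ℝ) ^ (-fq) * (p:ℝ) ^ (-1:ℤ)) = 1 :=
        inv_mul_cancel₀ (ne_of_gt hCpos)
      nlinarith [mul_le_mul_of_nonneg_right hC1 hCpos.le,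
        mul_le_mul_of_nonneg_right hge hCpos.le,
        mul_le_mul_of_nonneg_right hdesc hCpos.le]
    by_cases hwr : w + 3 ≤ r
    · -- cases E2 / E3
      have hwne : dlt a (w+1) ≠ fq := hwP' hwr
      have hsu := step_up (s := s) hx hm (w+1) (by omega) (by omega)
      have hsd := step_down (s := s) hx hm (w+1) (by omega) (by omega)
      simp only [Nat.add_sub_cancel] at hsu hsd
      rw [hrun w (by omega) le_rfl] at hsu hsd
      have hwl : w = τ' + 1 + (w - (τ'+1)) := by omega
      have hrhoτ : rho p r a (τ'+1)
          = (∑ i ∈ Finset.range (w - (τ'+1)), ((p:ℝ) ^ (-fq)) ^ i)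
            + ((p:ℝ) ^ (-fq)) ^ (w - (τ'+1)) * rho p r a w := by
        have h1 := rho_unroll (r := r) (a := a) hx fq (w - (τ'+1)) (τ'+1) (by omega)
          (fun i hi1 hi2 => hrun i (by omega) (by omega))
        rwa [← hwl] at h1
      have hrhow : rho p r a w = 1 + (p:ℝ) ^ (-(dlt a (w+1))) * rho p r a (w+1) :=
        rho_rec hx w (by omega)
      have hlamw : lam p a (w+1)
          = (∑ i ∈ Finset.range (w - (τ'+1)), ((p:ℝ) ^ (-fq)) ^ i)
            + ((p:ℝ) ^ (-fq)) ^ (w - (τ'+1)) * lam p a (τ'+1+1) := by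
        have h1 := lam_unroll (a := a) hx fq (τ'+1) (by omega) (w - (τ'+1))
          (fun i hi1 hi2 => hrun i (by omega) (by omega))
        rwa [show τ'+1+1+(w - (τ'+1)) = w+1 by omega] at h1
      have hlamτ1 : lam p a (τ'+1+1)
          = 1 + ((p:ℝ) ^ (-fq) * (p:ℝ) ^ (-1:ℤ)) * lam p a (τ'+1) := by
        have h1 := lam_rec (a := a) hx τ'
        rwa [hdpre, huv] at h1
      have hBge : (1:ℝ) ≤ rho p r a (w+1) := rho_ge_one hx (w+1) (by omega)
      have hul : (0:ℝ) < ((p:ℝ) ^ (-fq)) ^ (w - (τ'+1)) := by positivity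
      have hul1 : ((p:ℝ) ^ (-fq)) ^ (w - (τ'+1) + 1) ≤ (p:ℝ) ^ (-fq) := by
        calc ((p:ℝ) ^ (-fq)) ^ (w - (τ'+1) + 1) ≤ ((p:ℝ) ^ (-fq)) ^ 1 :=
              pow_le_pow_of_le_one hu0.le (by linarith) (by omega)
        _ = (p:ℝ) ^ (-fq) := pow_one _
      have hgeom : (∑ i ∈ Finset.range (w - (τ'+1) + 1), ((p:ℝ) ^ (-fq)) ^ i)
          * ((p:ℝ) ^ (-fq) - 1) = ((p:ℝ) ^ (-fq)) ^ (w - (τ'+1) + 1) - 1 :=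
        geom_sum_mul _ _
      rcases (by omega : dlt a (w+1) = fq + 1 ∨ dlt a (w+1) = fq - 1) with hval | hval
      · -- E2 : ascent after the run
        have hasc : lam p a (w+1) ≤ rho p r a (w+1) := by
          apply swap_ascent hx hm (w+1) (by omega) (by omega)
          simp only [Nat.add_sub_cancel]
          rw [hrun w (by omega) le_rfl, hval]
          omega
        rw [hval, huv] at hrhow
        have hw0' : (0:ℝ) < ((p:ℝ) ^ (-fq)) ^ (w - (τ'+1) + 1) := by positivity
        have hg1 : (∑ i ∈ Finset.range (w - (τ'+1) + 1), ((p:ℝ) ^ (-fq)) ^ i)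
            + (((p:ℝ) ^ (-fq)) ^ (w - (τ'+1) + 1) * (p:ℝ) ^ (-1:ℤ)) * rho p r a (w+1)
            ≤ lam p a (τ'+1) := by
          have he : rho p r a (τ'+1)
              = (∑ i ∈ Finset.range (w - (τ'+1) + 1), ((p:ℝ) ^ (-fq)) ^ i)
              + (((p:ℝ) ^ (-fq)) ^ (w - (τ'+1) + 1) * (p:ℝ) ^ (-1:ℤ)) * rho p r a (w+1) := by
            rw [hrhoτ, hrhow, Finset.sum_range_succ, pow_succ]
            ring
          linarith [he, hdesc]
        have hg2 : (∑ i ∈ Finset.range (w - (τ'+1) + 1), ((p:ℝ) ^ (-fq)) ^ i)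
            + (((p:ℝ) ^ (-fq)) ^ (w - (τ'+1) + 1) * (p:ℝ) ^ (-1:ℤ)) * lam p a (τ'+1)
            ≤ rho p r a (w+1) := by
          have he : lam p a (w+1)
              = (∑ i ∈ Finset.range (w - (τ'+1) + 1), ((p:ℝ) ^ (-fq)) ^ i)
              + (((p:ℝ) ^ (-fq)) ^ (w - (τ'+1) + 1) * (p:ℝ) ^ (-1:ℤ)) * lam p a (τ'+1) := by
            rw [hlamw, hlamτ1, Finset.sum_range_succ, pow_succ]
            ring
          linarith [he, hasc]
        exact e2_arith ((p:ℝ) ^ (-fq)) ((p:ℝ) ^ (-1:ℤ))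
          (((p:ℝ) ^ (-fq)) ^ (w - (τ'+1) + 1))
          (∑ i ∈ Finset.range (w - (τ'+1) + 1), ((p:ℝ) ^ (-fq)) ^ i)
          (lam p a (τ'+1)) (rho p r a (w+1))
          hu0 hu2 hv0 hv2 hul1 hw0' hgeom hg1 hg2 hlamτ
      · -- E3 : further descent after the run
        have hrx : (p:ℝ) ^ (-(dlt a (w+1))) = (p:ℝ) ^ (-fq) * (p:ℝ) := by
          rw [hval, show -(fq - 1) = -fq + 1 by ring, zpow_add₀ hxne, zpow_one]
        rw [hrx] at hrhow
        apply hfinal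
        have he : rho p r a (τ'+1)
            = (∑ i ∈ Finset.range (w - (τ'+1)), ((p:ℝ)^(-fq)) ^ i)
            + ((p:ℝ)^(-fq))^(w - (τ'+1))
            + (((p:ℝ)^(-fq))^(w - (τ'+1)) * ((p:ℝ)^(-fq) * (p:ℝ))) * rho p r a (w+1) := by
          rw [hrhoτ, hrhow]
          ring
        have h2 : (((p:ℝ)^(-fq))^(w - (τ'+1)) * ((p:ℝ)^(-fq) * (p:ℝ))) * 1
            ≤ (((p:ℝ)^(-fq))^(w - (τ'+1)) * ((p:ℝ)^(-fq) * (p:ℝ))) * rho p r a (w+1) := by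
          apply mul_le_mul_of_nonneg_left hBge
          positivity
        have h4 : (0:ℝ) < ((p:ℝ)^(-fq))^(w - (τ'+1)) * (p:ℝ)^(-fq) :=
          mul_pos hul hu0
        have h3 : 2 * (((p:ℝ)^(-fq))^(w - (τ'+1)) * (p:ℝ)^(-fq))
            ≤ ((p:ℝ)^(-fq))^(w - (τ'+1)) * ((p:ℝ)^(-fq) * (p:ℝ)) := by
          nlinarith [mul_le_mul_of_nonneg_left hx h4.le]
        rcases Nat.eq_zero_or_pos (w - (τ'+1)) with hl0 | hl0
        · rw [hl0] at he
          simp only [Finset.range_zero, Finset.sum_empty, pow_zero] at he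
          rw [hl0] at h2 h3 h4
          simp only [pow_zero] at h2 h3 h4
          rw [he]
          linarith
        · have hN2 : 1 + (p:ℝ)^(-fq) ≤ (∑ i ∈ Finset.range (w - (τ'+1)), ((p:ℝ)^(-fq))^i)
              + ((p:ℝ)^(-fq))^(w - (τ'+1)) := by
            rw [← Finset.sum_range_succ]
            have h1 : (1:ℝ) + (p:ℝ)^(-fq) = ∑ i ∈ Finset.range 2, ((p:ℝ)^(-fq)) ^ i := by
              simp [Finset.sum_range_succ]
            rw [h1]
            apply Finset.sum_le_sum_of_subset_of_nonneg
            · intro i hi; simp at hi ⊢; omega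
            · intro i _ _; positivity
          rw [he]
          linarith
    · -- case E1 : the run reaches the end
      have hw2 : w = r - 2 := by omega
      apply hfinal
      have hl1 : 1 ≤ r - 2 - (τ'+1) := by omega
      have hrhoτ : rho p r a (τ'+1)
          = ∑ i ∈ Finset.range (r - 2 - (τ'+1) + 1), ((p:ℝ)^(-fq)) ^ i := by
        have h1 := rho_unroll (r := r) (a := a) hx fq (r - 2 - (τ'+1)) (τ'+1) (by omega)
          (fun i hi1 hi2 => hrun i (by omega) (by omega))
        rw [show τ'+1+(r - 2 - (τ'+1)) = r - 2 by omega] at h1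
        rw [rho_last hr] at h1
        rw [h1, Finset.sum_range_succ]
        ring
      rw [hrhoτ]
      have h1 : (1:ℝ) + (p:ℝ)^(-fq) = ∑ i ∈ Finset.range 2, ((p:ℝ)^(-fq)) ^ i := by
        simp [Finset.sum_range_succ]
      rw [h1]
      apply Finset.sum_le_sum_of_subset_of_nonneg
      · intro i hi; simp at hi ⊢; omega
      · intro i _ _; positivity
  -- endgame
  have hsum : ∑ j ∈ Finset.range (r-1), dlt a j = (s:ℤ) - 1 := by
    have h1 : ∑ j ∈ Finset.range (r-1), (a (j+1) - a j) = a (r-1) - a 0 :=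
      Finset.sum_range_sub a (r-1)
    have h2 : ∑ j ∈ Finset.range (r-1), dlt a j
        = ∑ j ∈ Finset.range (r-1), (a (j+1) - a j) := rfl
    rw [h2, h1, hA.2.1, hA.1]
    ring
  have hlast_ge : fq ≤ dlt a (r-2) := by
    have h2 := step_down (s := s) hx hm (r-2) (by omega) (by omega)
    have h3 := hE (r-2-1) (by omega)
    have h4 : r - 2 - 1 + 1 = r - 2 := by omega
    omega
  have hsplit : ∑ j ∈ Finset.range (r-1), dlt a j
      = ∑ j ∈ Finset.range (r-2), dlt a j + dlt a (r-2) := by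
    rw [show r - 1 = (r-2) + 1 by omega, Finset.sum_range_succ]
  have hterm_ge : ∀ j ∈ Finset.range (r-2), fq + 1 ≤ dlt a j := by
    intro j hj
    simp at hj
    exact hE j (by omega)
  have hcards : ((r:ℤ) - 2) * (fq + 1) = ∑ _j ∈ Finset.range (r-2), (fq + 1) := by
    rw [Finset.sum_const, Finset.card_range, nsmul_eq_mul]
    congr 1
    push_cast [Nat.cast_sub (by omega : 2 ≤ r)]
    ring
  have hsum_ge : ((r:ℤ) - 2) * (fq + 1) ≤ ∑ j ∈ Finset.range (r-2), dlt a j := by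
    rw [hcards]
    exact Finset.sum_le_sum hterm_ge
  have hub' : (s:ℤ) - 1 ≤ ((r:ℤ) - 2) * (fq + 1) + fq := by
    have h1 : ((r:ℤ) - 1) * fq + ((r:ℤ) - 2) = ((r:ℤ) - 2) * (fq + 1) + fq := by ring
    omega
  have hall : ∀ j ∈ Finset.range (r-2), dlt a j = fq + 1 := by
    by_contra hcon
    push_neg at hcon
    obtain ⟨j0, hj0, hj0ne⟩ := hcon
    have hj0lt : fq + 1 < dlt a j0 := by
      have := hterm_ge j0 hj0
      omega
    have hstrict : ((r:ℤ) - 2) * (fq + 1) < ∑ j ∈ Finset.range (r-2), dlt a j := by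
      rw [hcards]
      exact Finset.sum_lt_sum hterm_ge ⟨j0, hj0, hj0lt⟩
    omega
  have hlast : dlt a (r-2) = fq := by
    have h1 : ∑ j ∈ Finset.range (r-2), dlt a j = ((r:ℤ) - 2) * (fq + 1) := by
      rw [Finset.sum_congr rfl hall, hcards]
    omega
  intro j hj
  by_cases hje : j = r - 2
  · rw [if_pos hje, hje]; exact hlast
  · rw [if_neg hje]
    exact hall j (Finset.mem_range.2 (by omega))


noncomputable def rev (s r : ℕ) (a : ℕ → ℤ) : ℕ → ℤ :=
  fun i => (s : ℤ) - 1 - a (r - 1 - i)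

lemma hp_rev (hr : 3 ≤ r) (a : ℕ → ℤ) : hp p r (rev s r a) = hp p r a := by
  unfold hp
  rw [← Finset.sum_product', ← Finset.sum_product']
  rw [← Finset.sum_filter, ← Finset.sum_filter]
  apply Finset.sum_nbij' (i := fun z => (r - 1 - z.2, r - 1 - z.1))
    (j := fun z => (r - 1 - z.2, r - 1 - z.1))
  · intro z hz
    simp only [Finset.mem_filter, Finset.mem_product, Finset.mem_range] at hz ⊢
    omega
  · intro z hz
    simp only [Finset.mem_filter, Finset.mem_product, Finset.mem_range] at hz ⊢
    omega
  · intro z hz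
    simp only [Finset.mem_filter, Finset.mem_product, Finset.mem_range] at hz
    ext <;> simp <;> omega
  · intro z hz
    simp only [Finset.mem_filter, Finset.mem_product, Finset.mem_range] at hz
    ext <;> simp <;> omega
  · intro z hz
    simp only [Finset.mem_filter, Finset.mem_product, Finset.mem_range] at hz
    dsimp only
    unfold rev
    congr 1
    ring

lemma admissible_rev (hA : Admissible s r a) (hr : 3 ≤ r) : Admissible s r (rev s r a) := by
  obtain ⟨h0, hend, hmono⟩ := hA
  refine ⟨?_, ?_, ?_⟩
  · unfold rev
    simp only [Nat.sub_zero]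
    rw [hend]; ring
  · unfold rev
    rw [show r - 1 - (r-1) = 0 by omega, h0]; ring
  · intro i hi
    unfold rev
    have h1 : r - 1 - i = (r - 1 - (i+1)) + 1 := by omega
    rw [h1]
    have := hmono (r - 1 - (i+1)) (by omega)
    omega

lemma dlt_rev (a : ℕ → ℤ) (j : ℕ) (hj : j + 2 ≤ r) :
    dlt (rev s r a) j = dlt a (r - 2 - j) := by
  unfold dlt rev
  have h1 : r - 1 - j = (r - 2 - j) + 1 := by omega
  have h2 : r - 1 - (j + 1) = r - 2 - j := by omega
  rw [h1, h2]
  ring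

lemma minimizer_rev (hm : IsMinimizer p s r a) (hr : 3 ≤ r) :
    IsMinimizer p s r (rev s r a) := by
  refine ⟨admissible_rev hm.1 hr, ?_⟩
  intro b hb
  rw [hp_rev hr]
  calc hp p r a ≤ hp p r (rev s r b) := hm.2 _ (admissible_rev hb hr)
  _ = hp p r b := hp_rev hr b


end S9

/-- Proposition 3.2: let `a` be a minimizer of `h_p` over `A(s,r)` and `d = δ(a)`.
If `d_1 = [q+1]` or `d_{r-1} = [q+1]` (with `[q] = ⌊(s-1)/(r-1)⌋`, `[q+1] = [q]+1`),
then `d = ([q],[q+1],…,[q+1])` or `d = ([q+1],…,[q+1],[q])`. -/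
theorem stmt9 (p s r : ℕ) (hpp : p.Prime) (hr : 3 ≤ r) (hrs : r < s)
    (fq : ℤ) (hfq : fq = (((s - 1) / (r - 1) : ℕ) : ℤ))
    (a : ℕ → ℤ) (ha : IsMinimizer p s r a)
    (hend : dlt a 0 = fq + 1 ∨ dlt a (r - 2) = fq + 1) :
    (∀ j < r - 1, dlt a j = if j = 0 then fq else fq + 1) ∨
    (∀ j < r - 1, dlt a j = if j = r - 2 then fq else fq + 1) := by
  have hx : (2:ℝ) ≤ (p:ℝ) := by exact_mod_cast hpp.two_le
  have hr1 : 0 < r - 1 := by omega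
  have hfq1 : 1 ≤ fq := by
    rw [hfq]
    have h1 : 1 ≤ (s - 1) / (r - 1) := (Nat.one_le_div_iff hr1).2 (by omega)
    exact_mod_cast h1
  have hub : (s:ℤ) - 1 ≤ ((r:ℤ) - 1) * fq + ((r:ℤ) - 2) := by
    have h1 : (r - 1) * ((s - 1) / (r - 1)) + (s - 1) % (r - 1) = s - 1 :=
      Nat.div_add_mod (s-1) (r-1)
    have h2 : (s - 1) % (r - 1) < r - 1 := Nat.mod_lt _ hr1
    have h3 : ((r - 1 : ℕ) : ℤ) * fq + (((s - 1) % (r - 1) : ℕ) : ℤ) = ((s - 1 : ℕ) : ℤ) := by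
      rw [hfq]
      exact_mod_cast congrArg (Nat.cast : ℕ → ℤ) h1
    have h4 : ((r - 1 : ℕ) : ℤ) = (r:ℤ) - 1 := by
      push_cast [Nat.cast_sub (by omega : 1 ≤ r)]
      ring
    have h5 : ((s - 1 : ℕ) : ℤ) = (s:ℤ) - 1 := by
      push_cast [Nat.cast_sub (by omega : 1 ≤ s)]
      ring
    rw [h4, h5] at h3
    have h6 : (((s - 1) % (r - 1) : ℕ) : ℤ) ≤ (r:ℤ) - 2 := by
      have : ((s - 1) % (r - 1) : ℕ) ≤ r - 2 := by omega
      calc (((s - 1) % (r - 1) : ℕ) : ℤ) ≤ ((r - 2 : ℕ) : ℤ) := by exact_mod_cast this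
      _ = (r:ℤ) - 2 := by push_cast [Nat.cast_sub (by omega : 2 ≤ r)]; ring
    omega
  rcases hend with h0 | h0
  · exact Or.inr (S9.main_case hx hr fq hfq1 hub ha h0)
  · left
    have hrev0 : dlt (S9.rev s r a) 0 = fq + 1 := by
      rw [S9.dlt_rev a 0 (by omega)]
      simpa using h0
    have hmain := S9.main_case hx hr fq hfq1 hub (S9.minimizer_rev ha hr) hrev0
    intro j hj
    have hj2 : r - 2 - j < r - 1 := by omega
    have h1 := hmain (r - 2 - j) hj2
    rw [S9.dlt_rev a (r - 2 - j) (by omega)] at h1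
    rw [show r - 2 - (r - 2 - j) = j by omega] at h1
    by_cases hj0 : j = 0
    · rw [if_pos hj0]
      rw [if_pos (by omega : r - 2 - j = r - 2)] at h1
      exact h1
    · rw [if_neg hj0]
      rw [if_neg (by omega : ¬ (r - 2 - j = r - 2))] at h1
      exact h1
end

section
/- Let p ≥ 3 be a prime and let 3 ≤ r < s be integers with (r-1) ∤ (s-1) and (r-1) ∤ s. If h_p(a) = min h_p for some a ∈ A(s,r), then δ(a) ∈ Biv*(s,r); that is, the delta vector of any minimizer is bivalent and its first and last entries both equal [q]. -/
noncomputable def XX (p r : ℕ) (a : ℕ → ℤ) (m k : ℕ) : ℝ :=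
  ∑ u ∈ Finset.range r, ∑ v ∈ Finset.range r,
    if u < m ∧ m ≤ v ∧ v ≤ k then (p : ℝ) ^ (a u - a v) else 0

noncomputable def YY (p r : ℕ) (a : ℕ → ℤ) (m k : ℕ) : ℝ :=
  ∑ u ∈ Finset.range r, ∑ v ∈ Finset.range r,
    if m ≤ u ∧ u ≤ k ∧ k < v then (p : ℝ) ^ (a u - a v) else 0

private lemma ite_zpow_nonneg {P : ℝ} (hP : 0 ≤ P) (c : Prop) [Decidable c] (e : ℤ) :
    0 ≤ if c then P ^ e else 0 := by
  by_cases h : c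
  · rw [if_pos h]; exact zpow_nonneg hP e
  · rw [if_neg h]

private lemma adm_gap {s r : ℕ} {a : ℕ → ℤ} (h : Admissible s r a) :
    ∀ i j : ℕ, i ≤ j → j ≤ r - 1 → (j : ℤ) - (i : ℤ) ≤ a j - a i := by
  intro i j
  induction j with
  | zero => intro hij _; have : i = 0 := Nat.le_zero.mp hij; subst this; simp
  | succ n ih =>
    intro hij hj
    rcases Nat.lt_or_ge i (n + 1) with h1 | h2
    · have hi : i ≤ n := by omega
      have hn : n ≤ r - 1 := by omega
      have hmono := h.2.2 n (by omega)
      have := ih hi hn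
      push_cast
      push_cast at this
      linarith
    · have : i = n + 1 := by omega
      subst this; simp

private lemma geomZ {x : ℝ} (hx : 1 < x) (n : ℕ) :
    ∑ t ∈ Finset.range n, x ^ (-(t : ℤ)) ≤ x / (x - 1) := by
  have hx0 : (0 : ℝ) < x := lt_trans one_pos hx
  have hx1 : (0 : ℝ) < x - 1 := by linarith
  induction n with
  | zero => simp; positivity
  | succ n ih =>
    rw [Finset.sum_range_succ']
    have he : ∀ i ∈ Finset.range n, x ^ (-((i + 1 : ℕ) : ℤ)) = x⁻¹ * x ^ (-(i : ℤ)) := by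
      intro i _
      rw [← zpow_neg_one, ← zpow_add₀ (ne_of_gt hx0)]
      congr 1
      push_cast; ring
    rw [Finset.sum_congr rfl he, ← Finset.mul_sum]
    have hxi : (0 : ℝ) ≤ x⁻¹ := by positivity
    have h2 : x⁻¹ * ∑ i ∈ Finset.range n, x ^ (-(i : ℤ)) ≤ x⁻¹ * (x / (x - 1)) :=
      mul_le_mul_of_nonneg_left ih hxi
    have h3 : x⁻¹ * (x / (x - 1)) = 1 / (x - 1) := by
      field_simp
    have h4 : x ^ (-(0 : ℕ) : ℤ) = 1 := by norm_num
    rw [h4]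
    rw [h3] at h2
    have : 1 / (x - 1) + 1 = x / (x - 1) := by field_simp; ring
    linarith

private lemma sum_range_if_eq_Icc {n lo hi : ℕ} (hhi : hi < n) (f : ℕ → ℝ)
    (C : ℕ → Prop) [DecidablePred C] (hC : ∀ v, v < n → (C v ↔ lo ≤ v ∧ v ≤ hi)) :
    (∑ v ∈ Finset.range n, if C v then f v else 0) = ∑ v ∈ Finset.Icc lo hi, f v := by
  rw [← Finset.sum_filter]
  apply Finset.sum_congr _ fun _ _ => rfl
  ext v
  simp only [Finset.mem_filter, Finset.mem_range, Finset.mem_Icc]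
  constructor
  · rintro ⟨h1, h2⟩; exact (hC v h1).mp h2
  · intro h
    have hv : v < n := by omega
    exact ⟨hv, (hC v hv).mpr h⟩

private lemma factor_bound {x : ℝ} (hx : 1 < x) (n lo hi : ℕ) (hhi : hi < n) (hlohi : lo ≤ hi)
    (C : ℕ → Prop) [DecidablePred C] (hC : ∀ u, u < n → (C u ↔ lo ≤ u ∧ u ≤ hi))
    (e : ℕ → ℤ)
    (he : (∀ u, lo ≤ u → u ≤ hi → e u = (u : ℤ) - (hi : ℤ)) ∨
          (∀ u, lo ≤ u → u ≤ hi → e u = (lo : ℤ) - (u : ℤ))) :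
    (∑ u ∈ Finset.range n, if C u then x ^ (e u) else 0) ≤ x / (x - 1) := by
  rw [sum_range_if_eq_Icc hhi _ C hC]
  rw [← Finset.Ico_add_one_right_eq_Icc, Finset.sum_Ico_eq_sum_range]
  rcases he with he | he
  · rw [← Finset.sum_range_reflect]
    have hcong : ∀ i ∈ Finset.range (hi + 1 - lo),
        x ^ (e (lo + (hi + 1 - lo - 1 - i))) = x ^ (-(i : ℤ)) := by
      intro i hi2
      simp only [Finset.mem_range] at hi2
      rw [he _ (by omega) (by omega)]
      congr 1
      omega
    rw [Finset.sum_congr rfl hcong]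
    exact geomZ hx _
  · have hcong : ∀ i ∈ Finset.range (hi + 1 - lo),
        x ^ (e (lo + i)) = x ^ (-(i : ℤ)) := by
      intro i hi2
      simp only [Finset.mem_range] at hi2
      rw [he _ (by omega) (by omega)]
      congr 1
      omega
    rw [Finset.sum_congr rfl hcong]
    exact geomZ hx _

private lemma shift_hp (p r : ℕ) (hp0 : (0:ℝ) < (p:ℝ)) (a : ℕ → ℤ) (ε : ℤ) (m k : ℕ) :
    hp p r (fun i => if m ≤ i ∧ i ≤ k then a i + ε else a i)
      = hp p r a + ((p:ℝ) ^ (-ε) - 1) * XX p r a m k + ((p:ℝ) ^ ε - 1) * YY p r a m k := by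
  have hne : (p:ℝ) ≠ 0 := ne_of_gt hp0
  unfold hp XX YY
  rw [Finset.mul_sum, Finset.mul_sum, ← Finset.sum_add_distrib, ← Finset.sum_add_distrib]
  refine Finset.sum_congr rfl fun u _ => ?_
  rw [Finset.mul_sum, Finset.mul_sum, ← Finset.sum_add_distrib, ← Finset.sum_add_distrib]
  refine Finset.sum_congr rfl fun v _ => ?_
  dsimp only
  split_ifs <;>
    first
      | (exfalso; omega)
      | (rw [show a u + ε - (a v + ε) = a u - a v by ring]; ring1)
      | (rw [show a u + ε - a v = (a u - a v) + ε by ring, zpow_add₀ hne]; ring1)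
      | (rw [show a u - (a v + ε) = (a u - a v) + (-ε) by ring, zpow_add₀ hne]; ring1)
      | ring1

private lemma shift_adm {s r : ℕ} {a : ℕ → ℤ} (hadm : Admissible s r a) (ε : ℤ) (m k : ℕ)
    (hm : 1 ≤ m) (hmk : m ≤ k) (hk : k + 1 ≤ r - 1)
    (hedge : (ε = -1 ∧ a (m - 1) + 1 < a m) ∨ (ε = 1 ∧ a k + 1 < a (k + 1))) :
    Admissible s r (fun i => if m ≤ i ∧ i ≤ k then a i + ε else a i) := by
  obtain ⟨h0, hlast, hmono⟩ := hadm
  refine ⟨?_, ?_, ?_⟩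
  · simp only; rw [if_neg (by omega)]; exact h0
  · simp only; rw [if_neg (by omega)]; exact hlast
  · intro i hi
    simp only
    have hmono_i := hmono i hi
    by_cases h1 : m ≤ i ∧ i ≤ k <;> by_cases h2 : m ≤ i + 1 ∧ i + 1 ≤ k
    · rw [if_pos h1, if_pos h2]; omega
    · rw [if_pos h1, if_neg h2]
      have hik : i = k := by omega
      subst hik
      rcases hedge with ⟨he, hlt⟩ | ⟨he, hlt⟩ <;> subst he <;> omega
    · rw [if_neg h1, if_pos h2]
      rcases hedge with ⟨he, hlt⟩ | ⟨he, hlt⟩ <;> subst he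
      · rw [show m - 1 = i from by omega, show m = i + 1 from by omega] at hlt
        omega
      · omega
    · rw [if_neg h1, if_neg h2]; exact hmono_i

private lemma reduce1 {P X Y : ℝ} (hP : 3 ≤ P) (h : 0 ≤ (P - 1) * X + (P⁻¹ - 1) * Y) :
    Y ≤ P * X := by
  have hP0 : (0:ℝ) < P := by linarith
  have hP1 : (0:ℝ) < P - 1 := by linarith
  have h2 : 0 ≤ P * ((P - 1) * X + (P⁻¹ - 1) * Y) := mul_nonneg hP0.le h
  have hc : P * ((P⁻¹ - 1) * Y) = (1 - P) * Y := by
    field_simp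
  have hexp : P * ((P - 1) * X + (P⁻¹ - 1) * Y)
      = P * ((P - 1) * X) + P * ((P⁻¹ - 1) * Y) := by ring
  rw [hexp, hc] at h2
  have key : (P - 1) * Y ≤ (P - 1) * (P * X) := by nlinarith
  exact le_of_mul_le_mul_left key hP1

private lemma final_contra {P T X Y : ℝ} (hP : 3 ≤ P) (hT : 0 < T)
    (hY : P ^ (2 : ℕ) * T ≤ Y) (hX : X ≤ T * (P / (P - 1)) ^ 2) (hYX : Y ≤ P * X) : False := by
  have hP1 : (0:ℝ) < P - 1 := by linarith
  have hP0 : (0:ℝ) < P := by linarith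
  have h1 : P ^ (2:ℕ) * T ≤ P * (T * (P / (P - 1)) ^ 2) :=
    le_trans hY (le_trans hYX (mul_le_mul_of_nonneg_left hX hP0.le))
  have h2 : (P / (P - 1)) ^ 2 = P ^ 2 / (P - 1) ^ 2 := div_pow P (P - 1) 2
  rw [h2] at h1
  have h3 : P ^ (2:ℕ) * T * (P - 1) ^ 2 ≤ P * (T * (P ^ 2 / (P - 1) ^ 2)) * (P - 1) ^ 2 :=
    mul_le_mul_of_nonneg_right h1 (by positivity)
  have h4 : P * (T * (P ^ 2 / (P - 1) ^ 2)) * (P - 1) ^ 2 = P ^ 3 * T := by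
    field_simp
  rw [h4] at h3
  have h5 : (1:ℝ) ≤ (P - 1) ^ 2 - P := by nlinarith
  have h6 : P ^ 2 * T * ((P - 1) ^ 2 - P) ≤ 0 := by nlinarith
  have h7 : (0:ℝ) < P ^ 2 * T := by positivity
  nlinarith

private lemma XX_single {p r : ℕ} (hp0 : (0:ℝ) < (p:ℝ)) (a : ℕ → ℤ) (m k u0 v0 : ℕ)
    (hu : u0 < r) (hv : v0 < r) (hc : u0 < m ∧ m ≤ v0 ∧ v0 ≤ k) :
    (p:ℝ) ^ (a u0 - a v0) ≤ XX p r a m k := by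
  unfold XX
  have hstep : (p:ℝ) ^ (a u0 - a v0)
      ≤ ∑ v ∈ Finset.range r, if u0 < m ∧ m ≤ v ∧ v ≤ k then (p:ℝ) ^ (a u0 - a v) else 0 := by
    have := Finset.single_le_sum
      (f := fun v => if u0 < m ∧ m ≤ v ∧ v ≤ k then (p:ℝ) ^ (a u0 - a v) else 0)
      (fun i _ => ite_zpow_nonneg hp0.le _ _) (Finset.mem_range.mpr hv)
    simpa only [if_pos hc] using this
  refine le_trans hstep ?_
  exact Finset.single_le_sum
    (f := fun u => ∑ v ∈ Finset.range r, if u < m ∧ m ≤ v ∧ v ≤ k then (p:ℝ) ^ (a u - a v) else 0)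
    (fun i _ => Finset.sum_nonneg fun v _ => ite_zpow_nonneg hp0.le _ _)
    (Finset.mem_range.mpr hu)

private lemma YY_single {p r : ℕ} (hp0 : (0:ℝ) < (p:ℝ)) (a : ℕ → ℤ) (m k u0 v0 : ℕ)
    (hu : u0 < r) (hv : v0 < r) (hc : m ≤ u0 ∧ u0 ≤ k ∧ k < v0) :
    (p:ℝ) ^ (a u0 - a v0) ≤ YY p r a m k := by
  unfold YY
  have hstep : (p:ℝ) ^ (a u0 - a v0)
      ≤ ∑ v ∈ Finset.range r, if m ≤ u0 ∧ u0 ≤ k ∧ k < v then (p:ℝ) ^ (a u0 - a v) else 0 := by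
    have := Finset.single_le_sum
      (f := fun v => if m ≤ u0 ∧ u0 ≤ k ∧ k < v then (p:ℝ) ^ (a u0 - a v) else 0)
      (fun i _ => ite_zpow_nonneg hp0.le _ _) (Finset.mem_range.mpr hv)
    simpa only [if_pos hc] using this
  refine le_trans hstep ?_
  exact Finset.single_le_sum
    (f := fun u => ∑ v ∈ Finset.range r, if m ≤ u ∧ u ≤ k ∧ k < v then (p:ℝ) ^ (a u - a v) else 0)
    (fun i _ => Finset.sum_nonneg fun v _ => ite_zpow_nonneg hp0.le _ _)
    (Finset.mem_range.mpr hu)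

private lemma boundX {p s r : ℕ} (hP1 : 1 < (p:ℝ)) {a : ℕ → ℤ} (hadm : Admissible s r a)
    (m k : ℕ) (hm : 1 ≤ m) (hmk : m ≤ k) (hk : k ≤ r - 1) :
    XX p r a m k ≤ (p:ℝ) ^ (a (m - 1) - a m) * ((p:ℝ) / ((p:ℝ) - 1)) ^ 2 := by
  have hP0 : (0:ℝ) < (p:ℝ) := lt_trans one_pos hP1
  have hPne : (p:ℝ) ≠ 0 := ne_of_gt hP0
  have hr1 : 1 ≤ r := by omega
  set c : ℝ := (p:ℝ) ^ (a (m - 1) - a m) with hc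
  have key : ∀ u ∈ Finset.range r, ∀ v ∈ Finset.range r,
      (if u < m ∧ m ≤ v ∧ v ≤ k then (p:ℝ) ^ (a u - a v) else 0)
        ≤ c * ((if u < m then (p:ℝ) ^ ((u:ℤ) + 1 - m) else 0)
            * (if m ≤ v ∧ v ≤ k then (p:ℝ) ^ ((m:ℤ) - v) else 0)) := by
    intro u hu v hv
    by_cases hcond : u < m ∧ m ≤ v ∧ v ≤ k
    · rw [if_pos hcond, if_pos hcond.1, if_pos ⟨hcond.2.1, hcond.2.2⟩]
      rw [hc, ← zpow_add₀ hPne, ← zpow_add₀ hPne]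
      apply zpow_le_zpow_right₀ hP1.le
      have g1 : ((m:ℤ) - 1) - (u:ℤ) ≤ a (m - 1) - a u := by
        have := adm_gap hadm u (m - 1) (by omega) (by omega)
        have hcast : ((m - 1 : ℕ) : ℤ) = (m:ℤ) - 1 := by omega
        omega
      have g2 : (v:ℤ) - (m:ℤ) ≤ a v - a m := by
        have := adm_gap hadm m v hcond.2.1 (by
          simp only [Finset.mem_range] at hv; omega)
        omega
      omega
    · rw [if_neg hcond]
      have h1 : (0:ℝ) ≤ c := zpow_nonneg hP0.le _
      have h2 := ite_zpow_nonneg (P := (p:ℝ)) hP0.le (u < m) ((u:ℤ) + 1 - m)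
      have h3 := ite_zpow_nonneg (P := (p:ℝ)) hP0.le (m ≤ v ∧ v ≤ k) ((m:ℤ) - v)
      positivity
  have step1 : XX p r a m k
      ≤ ∑ u ∈ Finset.range r, ∑ v ∈ Finset.range r,
          c * ((if u < m then (p:ℝ) ^ ((u:ℤ) + 1 - m) else 0)
            * (if m ≤ v ∧ v ≤ k then (p:ℝ) ^ ((m:ℤ) - v) else 0)) := by
    unfold XX
    exact Finset.sum_le_sum fun u hu => Finset.sum_le_sum fun v hv => key u hu v hv
  have step2 : ∑ u ∈ Finset.range r, ∑ v ∈ Finset.range r,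
          c * ((if u < m then (p:ℝ) ^ ((u:ℤ) + 1 - m) else 0)
            * (if m ≤ v ∧ v ≤ k then (p:ℝ) ^ ((m:ℤ) - v) else 0))
      = c * ((∑ u ∈ Finset.range r, if u < m then (p:ℝ) ^ ((u:ℤ) + 1 - m) else 0)
           * (∑ v ∈ Finset.range r, if m ≤ v ∧ v ≤ k then (p:ℝ) ^ ((m:ℤ) - v) else 0)) := by
    rw [Finset.sum_mul_sum]
    simp_rw [Finset.mul_sum]
  rw [step2] at step1
  have f1 : (∑ u ∈ Finset.range r, if u < m then (p:ℝ) ^ ((u:ℤ) + 1 - m) else 0)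
      ≤ (p:ℝ) / ((p:ℝ) - 1) := by
    apply factor_bound hP1 r 0 (m - 1) (by omega) (by omega) _ (fun u hu => by omega)
    exact Or.inl (fun u h1 h2 => by omega)
  have f2 : (∑ v ∈ Finset.range r, if m ≤ v ∧ v ≤ k then (p:ℝ) ^ ((m:ℤ) - v) else 0)
      ≤ (p:ℝ) / ((p:ℝ) - 1) := by
    apply factor_bound hP1 r m k (by omega) hmk _ (fun v hv => Iff.rfl)
    exact Or.inr (fun v h1 h2 => rfl)
  have hf1nn : (0:ℝ) ≤ ∑ u ∈ Finset.range r, if u < m then (p:ℝ) ^ ((u:ℤ) + 1 - m) else 0 :=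
    Finset.sum_nonneg fun u _ => ite_zpow_nonneg hP0.le _ _
  have hf2nn : (0:ℝ) ≤ ∑ v ∈ Finset.range r, if m ≤ v ∧ v ≤ k then (p:ℝ) ^ ((m:ℤ) - v) else 0 :=
    Finset.sum_nonneg fun v _ => ite_zpow_nonneg hP0.le _ _
  have hB : (0:ℝ) ≤ (p:ℝ) / ((p:ℝ) - 1) := by
    have : (0:ℝ) < (p:ℝ) - 1 := by linarith
    positivity
  have hcnn : (0:ℝ) ≤ c := zpow_nonneg hP0.le _
  calc XX p r a m k ≤ c * (_ * _) := step1
    _ ≤ c * (((p:ℝ) / ((p:ℝ) - 1)) * ((p:ℝ) / ((p:ℝ) - 1))) := by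
        apply mul_le_mul_of_nonneg_left _ hcnn
        exact mul_le_mul f1 f2 hf2nn hB
    _ = c * ((p:ℝ) / ((p:ℝ) - 1)) ^ 2 := by ring

private lemma boundY {p s r : ℕ} (hP1 : 1 < (p:ℝ)) {a : ℕ → ℤ} (hadm : Admissible s r a)
    (m k : ℕ) (hmk : m ≤ k) (hk : k + 1 ≤ r - 1) :
    YY p r a m k ≤ (p:ℝ) ^ (a k - a (k + 1)) * ((p:ℝ) / ((p:ℝ) - 1)) ^ 2 := by
  have hP0 : (0:ℝ) < (p:ℝ) := lt_trans one_pos hP1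
  have hPne : (p:ℝ) ≠ 0 := ne_of_gt hP0
  set c : ℝ := (p:ℝ) ^ (a k - a (k + 1)) with hc
  have key : ∀ u ∈ Finset.range r, ∀ v ∈ Finset.range r,
      (if m ≤ u ∧ u ≤ k ∧ k < v then (p:ℝ) ^ (a u - a v) else 0)
        ≤ c * ((if m ≤ u ∧ u ≤ k then (p:ℝ) ^ ((u:ℤ) - k) else 0)
            * (if k < v ∧ v ≤ r - 1 then (p:ℝ) ^ ((k:ℤ) + 1 - v) else 0)) := by
    intro u hu v hv
    simp only [Finset.mem_range] at hu hv
    by_cases hcond : m ≤ u ∧ u ≤ k ∧ k < v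
    · rw [if_pos hcond, if_pos ⟨hcond.1, hcond.2.1⟩, if_pos ⟨hcond.2.2, by omega⟩]
      rw [hc, ← zpow_add₀ hPne, ← zpow_add₀ hPne]
      apply zpow_le_zpow_right₀ hP1.le
      have g1 : (k:ℤ) - (u:ℤ) ≤ a k - a u := adm_gap hadm u k hcond.2.1 (by omega)
      have g2 : (v:ℤ) - ((k:ℤ) + 1) ≤ a v - a (k + 1) := by
        have := adm_gap hadm (k + 1) v hcond.2.2 (by omega)
        have hcast : ((k + 1 : ℕ) : ℤ) = (k:ℤ) + 1 := by omega
        omega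
      omega
    · rw [if_neg hcond]
      have h1 : (0:ℝ) ≤ c := zpow_nonneg hP0.le _
      have h2 := ite_zpow_nonneg (P := (p:ℝ)) hP0.le (m ≤ u ∧ u ≤ k) ((u:ℤ) - k)
      have h3 := ite_zpow_nonneg (P := (p:ℝ)) hP0.le (k < v ∧ v ≤ r - 1) ((k:ℤ) + 1 - v)
      positivity
  have step1 : YY p r a m k
      ≤ ∑ u ∈ Finset.range r, ∑ v ∈ Finset.range r,
          c * ((if m ≤ u ∧ u ≤ k then (p:ℝ) ^ ((u:ℤ) - k) else 0)
            * (if k < v ∧ v ≤ r - 1 then (p:ℝ) ^ ((k:ℤ) + 1 - v) else 0)) := by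
    unfold YY
    exact Finset.sum_le_sum fun u hu => Finset.sum_le_sum fun v hv => key u hu v hv
  have step2 : ∑ u ∈ Finset.range r, ∑ v ∈ Finset.range r,
          c * ((if m ≤ u ∧ u ≤ k then (p:ℝ) ^ ((u:ℤ) - k) else 0)
            * (if k < v ∧ v ≤ r - 1 then (p:ℝ) ^ ((k:ℤ) + 1 - v) else 0))
      = c * ((∑ u ∈ Finset.range r, if m ≤ u ∧ u ≤ k then (p:ℝ) ^ ((u:ℤ) - k) else 0)
           * (∑ v ∈ Finset.range r, if k < v ∧ v ≤ r - 1 then (p:ℝ) ^ ((k:ℤ) + 1 - v) else 0)) := by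
    rw [Finset.sum_mul_sum]
    simp_rw [Finset.mul_sum]
  rw [step2] at step1
  have f1 : (∑ u ∈ Finset.range r, if m ≤ u ∧ u ≤ k then (p:ℝ) ^ ((u:ℤ) - k) else 0)
      ≤ (p:ℝ) / ((p:ℝ) - 1) := by
    apply factor_bound hP1 r m k (by omega) hmk _ (fun u hu => Iff.rfl)
    exact Or.inl (fun u h1 h2 => rfl)
  have f2 : (∑ v ∈ Finset.range r, if k < v ∧ v ≤ r - 1 then (p:ℝ) ^ ((k:ℤ) + 1 - v) else 0)
      ≤ (p:ℝ) / ((p:ℝ) - 1) := by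
    apply factor_bound hP1 r (k + 1) (r - 1) (by omega) (by omega) _ (fun v hv => by omega)
    exact Or.inr (fun v h1 h2 => by omega)
  have hf1nn : (0:ℝ) ≤ ∑ u ∈ Finset.range r, if m ≤ u ∧ u ≤ k then (p:ℝ) ^ ((u:ℤ) - k) else 0 :=
    Finset.sum_nonneg fun u _ => ite_zpow_nonneg hP0.le _ _
  have hf2nn : (0:ℝ) ≤ ∑ v ∈ Finset.range r, if k < v ∧ v ≤ r - 1 then (p:ℝ) ^ ((k:ℤ) + 1 - v) else 0 :=
    Finset.sum_nonneg fun v _ => ite_zpow_nonneg hP0.le _ _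
  have hB : (0:ℝ) ≤ (p:ℝ) / ((p:ℝ) - 1) := by
    have : (0:ℝ) < (p:ℝ) - 1 := by linarith
    positivity
  have hcnn : (0:ℝ) ≤ c := zpow_nonneg hP0.le _
  calc YY p r a m k ≤ c * (_ * _) := step1
    _ ≤ c * (((p:ℝ) / ((p:ℝ) - 1)) * ((p:ℝ) / ((p:ℝ) - 1))) := by
        apply mul_le_mul_of_nonneg_left _ hcnn
        exact mul_le_mul f1 f2 hf2nn hB
    _ = c * ((p:ℝ) / ((p:ℝ) - 1)) ^ 2 := by ring

private lemma keyDown {p s r : ℕ} (hP3 : 3 ≤ (p:ℝ)) {a : ℕ → ℤ} (hadm : Admissible s r a)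
    (hmin : ∀ b : ℕ → ℤ, Admissible s r b → hp p r a ≤ hp p r b)
    (m k : ℕ) (hm : 1 ≤ m) (hmk : m ≤ k) (hk : k + 1 ≤ r - 1)
    (hedge : a (m - 1) + 1 < a m) :
    YY p r a m k ≤ (p:ℝ) * XX p r a m k := by
  have hP0 : (0:ℝ) < (p:ℝ) := by linarith
  have hb := hmin _ (shift_adm hadm (-1) m k hm hmk hk (Or.inl ⟨rfl, hedge⟩))
  rw [shift_hp p r hP0 a (-1) m k] at hb
  simp only [neg_neg, zpow_one, zpow_neg_one] at hb
  exact reduce1 hP3 (by linarith)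

private lemma keyUp {p s r : ℕ} (hP3 : 3 ≤ (p:ℝ)) {a : ℕ → ℤ} (hadm : Admissible s r a)
    (hmin : ∀ b : ℕ → ℤ, Admissible s r b → hp p r a ≤ hp p r b)
    (m k : ℕ) (hm : 1 ≤ m) (hmk : m ≤ k) (hk : k + 1 ≤ r - 1)
    (hedge : a k + 1 < a (k + 1)) :
    XX p r a m k ≤ (p:ℝ) * YY p r a m k := by
  have hP0 : (0:ℝ) < (p:ℝ) := by linarith
  have hb := hmin _ (shift_adm hadm 1 m k hm hmk hk (Or.inr ⟨rfl, hedge⟩))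
  rw [shift_hp p r hP0 a 1 m k] at hb
  simp only [zpow_one, zpow_neg_one] at hb
  exact reduce1 hP3 (by linarith)

/-- Proposition 4.1 (framing): if `(r-1) ∤ (s-1)`, `(r-1) ∤ s` and `a` minimizes `h_p`
over `A(s,r)`, then `δ(a) ∈ Biv*(s,r)`: it is bivalent (any two entries differ by at
most 1; here all entries lie in `{[q], [q]+1}`) and its first and last entries both
equal `[q] = ⌊(s-1)/(r-1)⌋`. -/
theorem stmt10 (p s r : ℕ) (hpp : p.Prime) (hp3 : 3 ≤ p) (hr : 3 ≤ r) (hrs : r < s)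
    (hndvd1 : ¬ (r - 1) ∣ (s - 1)) (hndvd2 : ¬ (r - 1) ∣ s)
    (fq : ℤ) (hfq : fq = (((s - 1) / (r - 1) : ℕ) : ℤ))
    (a : ℕ → ℤ) (ha : IsMinimizer p s r a) :
    (∀ j < r - 1, ∀ k, k < r - 1 → dlt a j - dlt a k ≤ 1) ∧
    (∀ j < r - 1, dlt a j = fq ∨ dlt a j = fq + 1) ∧
    dlt a 0 = fq ∧ dlt a (r - 2) = fq := by
  obtain ⟨hadm, hmin⟩ := ha
  have hr4 : 4 ≤ r := by
    by_contra h
    have hr3 : r = 3 := by omega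
    subst hr3
    simp only [show (3:ℕ) - 1 = 2 from rfl] at hndvd1 hndvd2
    omega
  have hP3 : (3:ℝ) ≤ (p:ℝ) := by exact_mod_cast hp3
  have hP1 : (1:ℝ) < (p:ℝ) := by linarith
  have hP0 : (0:ℝ) < (p:ℝ) := by linarith
  have hPne : (p:ℝ) ≠ 0 := ne_of_gt hP0
  have hmono := hadm.2.2
  have hdpos : ∀ j, j + 1 < r → 1 ≤ dlt a j := by
    intro j hj
    have := hmono j hj
    have hd : dlt a j = a (j+1) - a j := rfl
    omega
  have hsum : ∑ j ∈ Finset.range (r-1), dlt a j = (s:ℤ) - 1 := by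
    simp only [dlt]
    rw [Finset.sum_range_sub a (r-1), hadm.2.1, hadm.1, sub_zero]
  have hfq1 : (1:ℤ) ≤ fq := by
    rw [hfq]
    have : 1 ≤ (s-1)/(r-1) := (Nat.one_le_div_iff (by omega)).mpr (by omega)
    exact_mod_cast this
  -- Part 1 : bivalence
  have part1 : ∀ j < r - 1, ∀ k, k < r - 1 → dlt a j - dlt a k ≤ 1 := by
    intro j hj k hk
    by_contra hcon
    push_neg at hcon
    have hdj : dlt a j = a (j+1) - a j := rfl
    have hdk : dlt a k = a (k+1) - a k := rfl
    have hdk1 : 1 ≤ dlt a k := hdpos k (by omega)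
    have hgap2 : a j + 1 < a (j+1) := by omega
    have hexp : (2:ℤ) + (a j - a (j+1)) ≤ a k - a (k+1) := by omega
    have hsplit : (p:ℝ) ^ ((2:ℤ) + (a j - a (j+1))) = (p:ℝ)^(2:ℕ) * (p:ℝ) ^ (a j - a (j+1)) := by
      rw [zpow_add₀ hPne, show (2:ℤ) = ((2:ℕ):ℤ) from rfl, zpow_natCast]
    have hT : (0:ℝ) < (p:ℝ) ^ (a j - a (j+1)) := zpow_pos hP0 _
    rcases Nat.lt_or_ge j k with hlt | hge
    · have hkey := keyDown hP3 hadm hmin (j+1) k (by omega) (by omega) (by omega)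
        (by simpa using hgap2)
      have hXb := boundX hP1 hadm (j+1) k (by omega) (by omega) (by omega)
      rw [Nat.add_sub_cancel] at hXb
      have hYb : (p:ℝ)^(2:ℕ) * (p:ℝ) ^ (a j - a (j+1)) ≤ YY p r a (j+1) k := by
        rw [← hsplit]
        refine le_trans (zpow_le_zpow_right₀ hP1.le hexp) ?_
        exact YY_single hP0 a (j+1) k k (k+1) (by omega) (by omega) ⟨by omega, le_rfl, by omega⟩
      exact final_contra hP3 hT hYb hXb hkey
    · have hjk : j ≠ k := by
        intro h
        rw [h] at hcon
        omega
      have hlt : k < j := by omega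
      have hkey := keyUp hP3 hadm hmin (k+1) j (by omega) (by omega) (by omega) hgap2
      have hYb := boundY hP1 hadm (k+1) j (by omega) (by omega)
      have hXb : (p:ℝ)^(2:ℕ) * (p:ℝ) ^ (a j - a (j+1)) ≤ XX p r a (k+1) j := by
        rw [← hsplit]
        refine le_trans (zpow_le_zpow_right₀ hP1.le hexp) ?_
        exact XX_single hP0 a (k+1) j k (k+1) (by omega) (by omega) ⟨by omega, le_rfl, by omega⟩
      exact final_contra hP3 hT hXb hYb hkey
  -- the minimum value equals fq
  have hne0 : (Finset.range (r-1)).Nonempty := ⟨0, Finset.mem_range.mpr (by omega)⟩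
  obtain ⟨j0, hj0mem, hj0min⟩ := Finset.exists_min_image (Finset.range (r-1)) (dlt a) hne0
  have hj0r : j0 < r - 1 := Finset.mem_range.mp hj0mem
  have hlb : ((r-1:ℕ):ℤ) * dlt a j0 ≤ (s:ℤ) - 1 := by
    have h2 := Finset.card_nsmul_le_sum (Finset.range (r-1)) (dlt a) (dlt a j0)
      (fun j hj => hj0min j hj)
    rw [Finset.card_range, hsum, nsmul_eq_mul] at h2
    exact h2
  have hub : (s:ℤ) - 1 ≤ ((r-1:ℕ):ℤ) * (dlt a j0 + 1) := by
    have h2 := Finset.sum_le_card_nsmul (Finset.range (r-1)) (dlt a) (dlt a j0 + 1)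
      (fun j hj => by
        have := part1 j (Finset.mem_range.mp hj) j0 hj0r
        omega)
    rw [Finset.card_range, nsmul_eq_mul] at h2
    rw [hsum] at h2
    exact h2
  have hdm := Nat.div_add_mod (s-1) (r-1)
  have hmodpos : 0 < (s-1) % (r-1) := by
    rcases Nat.eq_zero_or_pos ((s-1) % (r-1)) with h | h
    · exact absurd (Nat.dvd_of_mod_eq_zero h) hndvd1
    · exact h
  have hmodlt : (s-1) % (r-1) < r - 1 := Nat.mod_lt _ (by omega)
  have hseq : ((r-1:ℕ):ℤ) * fq + (((s-1) % (r-1) : ℕ):ℤ) = (s:ℤ) - 1 := by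
    rw [hfq]
    have h1 := congrArg (Nat.cast : ℕ → ℤ) hdm
    rw [Nat.cast_add, Nat.cast_mul] at h1
    have h2 : ((s-1:ℕ):ℤ) = (s:ℤ) - 1 := by omega
    linarith [h1, h2]
  have hj0fq : dlt a j0 = fq := by
    have hR0 : (0:ℤ) ≤ ((r-1:ℕ):ℤ) := by positivity
    have hMpos : (1:ℤ) ≤ (((s-1) % (r-1) : ℕ):ℤ) := by exact_mod_cast hmodpos
    have hMlt : (((s-1) % (r-1) : ℕ):ℤ) ≤ ((r-1:ℕ):ℤ) - 1 := by
      have := hmodlt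
      omega
    have e1 : ((r-1:ℕ):ℤ) * (fq + 1) = ((r-1:ℕ):ℤ) * fq + ((r-1:ℕ):ℤ) := by ring
    have e2 : ((r-1:ℕ):ℤ) * (dlt a j0 + 1) = ((r-1:ℕ):ℤ) * dlt a j0 + ((r-1:ℕ):ℤ) := by ring
    have l1 : ((r-1:ℕ):ℤ) * dlt a j0 < ((r-1:ℕ):ℤ) * (fq + 1) := by linarith
    have l2 : ((r-1:ℕ):ℤ) * fq < ((r-1:ℕ):ℤ) * (dlt a j0 + 1) := by linarith
    have b1 := lt_of_mul_lt_mul_left l1 hR0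
    have b2 := lt_of_mul_lt_mul_left l2 hR0
    omega
  have part2 : ∀ j < r - 1, dlt a j = fq ∨ dlt a j = fq + 1 := by
    intro j hj
    have h1 := hj0min j (Finset.mem_range.mpr hj)
    have h2 := part1 j hj j0 hj0r
    rw [hj0fq] at h1 h2
    omega
  have part3 : dlt a 0 = fq := by
    by_contra hc0
    have h0big : dlt a 0 = fq + 1 := by
      rcases part2 0 (by omega) with h | h
      · exact absurd h hc0
      · exact h
    have hex : ∃ n, n < r - 1 ∧ dlt a n = fq := ⟨j0, hj0r, hj0fq⟩
    set k := Nat.find hex with hkdef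
    have hkr : k < r - 1 := (Nat.find_spec hex).1
    have hksmall : dlt a k = fq := (Nat.find_spec hex).2
    have hbig : ∀ i, i < k → dlt a i = fq + 1 := by
      intro i hi
      have hir : i < r - 1 := by omega
      rcases part2 i hir with h | h
      · exact absurd ⟨hir, h⟩ (Nat.find_min hex hi)
      · exact h
    have hk1 : 1 ≤ k := by
      by_contra hk0
      have hke : k = 0 := by omega
      rw [hke] at hksmall
      omega
    have hk3 : k ≤ r - 3 := by
      by_contra hkk
      have hk2 : k = r - 2 := by omega
      have hsum2 : (s:ℤ) - 1 = ((r-2:ℕ):ℤ) * (fq + 1) + fq := by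
        rw [← hsum, show r - 1 = (r-2) + 1 from by omega, Finset.sum_range_succ]
        have hcong : ∀ i ∈ Finset.range (r-2), dlt a i = fq + 1 :=
          fun i hi => hbig i (by rw [hk2]; exact Finset.mem_range.mp hi)
        rw [Finset.sum_congr rfl hcong, Finset.sum_const, Finset.card_range,
          show dlt a (r-2) = fq from hk2 ▸ hksmall, nsmul_eq_mul]
      have e : ((r-2:ℕ):ℤ) + 1 = ((r-1:ℕ):ℤ) := by omega
      have hdvd : ((r-1:ℕ):ℤ) ∣ (s:ℤ) := ⟨fq + 1, by linear_combination hsum2 + (fq + 1) * e⟩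
      exact hndvd2 (by exact_mod_cast hdvd)
    have hav : ∀ v, v ≤ k → a v = (v:ℤ) * (fq + 1) := by
      intro v
      induction v with
      | zero => intro _; rw [hadm.1]; simp
      | succ n ih =>
        intro hv
        have h1 : a (n+1) - a n = fq + 1 := by rw [← hbig n (by omega)]; rfl
        have h2 := ih (by omega)
        have h3 : a (n+1) = (n:ℤ) * (fq+1) + (fq+1) := by linarith
        rw [h3]
        push_cast
        ring
    have hak1 : a (k+1) = (k:ℤ) * (fq + 1) + fq := by
      have h1 : a (k+1) - a k = fq := by rw [← hksmall]; rfl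
      have h2 := hav k le_rfl
      linarith
    have hedge : a 0 + 1 < a 1 := by
      have h1 : a 1 - a 0 = fq + 1 := by rw [← h0big]; rfl
      omega
    have hkey := keyDown hP3 hadm hmin 1 k le_rfl hk1 (by omega) hedge
    have hXX : XX p r a 1 k = ∑ v ∈ Finset.Icc 1 k, (p:ℝ) ^ (a 0 - a v) := by
      unfold XX
      rw [Finset.sum_eq_single_of_mem 0 (Finset.mem_range.mpr (by omega))
        (fun u hu hune => Finset.sum_eq_zero fun v hv => if_neg (by omega))]
      exact sum_range_if_eq_Icc (by omega : k < r) _ _ (fun v hv => by omega)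
    have hS1 : (p:ℝ) * ∑ v ∈ Finset.Icc 1 k, (p:ℝ) ^ (a 0 - a v)
        = ∑ u ∈ Finset.Icc 1 k, (p:ℝ) ^ (a u - a (k+1)) := by
      rw [Finset.mul_sum]
      apply Finset.sum_nbij' (i := fun v => k + 1 - v) (j := fun u => k + 1 - u)
      · intro v hv; simp only [Finset.mem_Icc] at *; omega
      · intro u hu; simp only [Finset.mem_Icc] at *; omega
      · intro v hv; simp only [Finset.mem_Icc] at hv; omega
      · intro u hu; simp only [Finset.mem_Icc] at hu; omega
      · intro v hv
        simp only [Finset.mem_Icc] at hv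
        rw [hadm.1, hav v hv.2, hav (k+1-v) (by omega), hak1]
        rw [show ((k+1-v:ℕ):ℤ) = (k:ℤ) + 1 - (v:ℤ) from by omega]
        rw [show (p:ℝ) * (p:ℝ) ^ ((0:ℤ) - (v:ℤ)*(fq+1)) = (p:ℝ) ^ ((1:ℤ) + ((0:ℤ) - (v:ℤ)*(fq+1)))
          from by rw [zpow_add₀ hPne, zpow_one]]
        congr 1
        ring
    have hYlow : (∑ u ∈ Finset.Icc 1 k, (p:ℝ) ^ (a u - a (k+1))) + (p:ℝ) ^ (a k - a (k+2))
        ≤ YY p r a 1 k := by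
      unfold YY
      have h1 : ∀ u ∈ Finset.range r,
          ((if 1 ≤ u ∧ u ≤ k then (p:ℝ) ^ (a u - a (k+1)) else 0)
            + (if u = k then (p:ℝ) ^ (a k - a (k+2)) else 0))
          ≤ ∑ v ∈ Finset.range r, if 1 ≤ u ∧ u ≤ k ∧ k < v then (p:ℝ) ^ (a u - a v) else 0 := by
        intro u hu
        by_cases hcase : 1 ≤ u ∧ u ≤ k
        · by_cases huk : u = k
          · subst huk
            rw [if_pos hcase, if_pos rfl]
            have hsub : ({k+1, k+2} : Finset ℕ) ⊆ Finset.range r := by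
              intro x hx
              simp only [Finset.mem_insert, Finset.mem_singleton] at hx
              rcases hx with h | h <;> (subst h; exact Finset.mem_range.mpr (by omega))
            refine le_trans ?_ (Finset.sum_le_sum_of_subset_of_nonneg hsub
              (fun v _ _ => ite_zpow_nonneg hP0.le _ _))
            rw [Finset.sum_pair (by omega : k+1 ≠ k+2)]
            rw [if_pos (⟨hcase.1, hcase.2, by omega⟩ : 1 ≤ k ∧ k ≤ k ∧ k < k + 1),
                if_pos (⟨hcase.1, hcase.2, by omega⟩ : 1 ≤ k ∧ k ≤ k ∧ k < k + 2)]
          · rw [if_pos hcase, if_neg huk, add_zero]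
            have hterm := Finset.single_le_sum
              (f := fun v => if 1 ≤ u ∧ u ≤ k ∧ k < v then (p:ℝ) ^ (a u - a v) else 0)
              (fun i _ => ite_zpow_nonneg hP0.le _ _)
              (Finset.mem_range.mpr (show k+1 < r by omega))
            simpa only [if_pos (⟨hcase.1, hcase.2, by omega⟩ : 1 ≤ u ∧ u ≤ k ∧ k < k+1)]
              using hterm
        · rw [if_neg hcase, if_neg (by intro h; subst h; exact hcase ⟨hk1, le_rfl⟩), add_zero]
          exact Finset.sum_nonneg fun v _ => ite_zpow_nonneg hP0.le _ _
      have h2 := Finset.sum_le_sum h1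
      rw [Finset.sum_add_distrib] at h2
      rw [sum_range_if_eq_Icc (show k < r by omega) (fun u => (p:ℝ) ^ (a u - a (k+1)))
            _ (fun v hv => Iff.rfl)] at h2
      rw [Finset.sum_ite_eq' (Finset.range r) k (fun _ => (p:ℝ) ^ (a k - a (k+2))),
        if_pos (Finset.mem_range.mpr (show k < r by omega))] at h2
      exact h2
    have hposx : (0:ℝ) < (p:ℝ) ^ (a k - a (k+2)) := zpow_pos hP0 _
    rw [hXX] at hkey
    rw [hS1] at hkey
    linarith [hYlow, hkey, hposx]
  have part4 : dlt a (r-2) = fq := by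
    by_contra hcL
    have hLbig : dlt a (r-2) = fq + 1 := by
      rcases part2 (r-2) (by omega) with h | h
      · exact absurd h hcL
      · exact h
    set k := Nat.findGreatest (fun n => dlt a n = fq) (r-2) with hkdef
    have hksmall : dlt a k = fq :=
      Nat.findGreatest_spec (P := fun n => dlt a n = fq) (show j0 ≤ r-2 by omega) hj0fq
    have hkub : k ≤ r - 2 := Nat.findGreatest_le _
    have hbig : ∀ i, k < i → i ≤ r - 2 → dlt a i = fq + 1 := by
      intro i h1 h2
      rcases part2 i (by omega) with h | h
      · exact absurd h (Nat.findGreatest_is_greatest h1 h2)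
      · exact h
    have hk3 : k ≤ r - 3 := by
      by_contra h
      have hke : k = r - 2 := by omega
      rw [hke] at hksmall
      omega
    have hk1 : 1 ≤ k := by
      by_contra h
      have hk0 : k = 0 := by omega
      have hsum2 : (s:ℤ) - 1 = ((r-2:ℕ):ℤ) * (fq + 1) + fq := by
        rw [← hsum, show r - 1 = (r-2) + 1 from by omega, Finset.sum_range_succ']
        have hcong : ∀ i ∈ Finset.range (r-2), dlt a (i+1) = fq + 1 :=
          fun i hi => hbig (i+1) (by omega) (by
            have := Finset.mem_range.mp hi; omega)
        rw [Finset.sum_congr rfl hcong, Finset.sum_const, Finset.card_range, nsmul_eq_mul]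
        rw [show dlt a 0 = fq from hk0 ▸ hksmall]
      have e : ((r-2:ℕ):ℤ) + 1 = ((r-1:ℕ):ℤ) := by omega
      have hdvd : ((r-1:ℕ):ℤ) ∣ (s:ℤ) := ⟨fq + 1, by linear_combination hsum2 + (fq + 1) * e⟩
      exact hndvd2 (by exact_mod_cast hdvd)
    have hauw : ∀ w, w ≤ r - 2 - k → a (r - 1 - w) = (s:ℤ) - 1 - (w:ℤ) * (fq + 1) := by
      intro w
      induction w with
      | zero => intro _; simpa using hadm.2.1
      | succ n ih =>
        intro hn
        have h2 := ih (by omega)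
        have hd : dlt a (r - 2 - n) = fq + 1 := hbig (r - 2 - n) (by omega) (by omega)
        have h3 : a (r - 2 - n + 1) - a (r - 2 - n) = fq + 1 := by rw [← hd]; rfl
        rw [show r - 2 - n + 1 = r - 1 - n from by omega] at h3
        rw [show r - 1 - (n+1) = r - 2 - n from by omega]
        push_cast
        push_cast at h2
        linarith [h2, h3]
    have hau : ∀ u, k + 1 ≤ u → u ≤ r - 1 → a u = (s:ℤ) - 1 - ((r - 1 - u : ℕ):ℤ) * (fq + 1) := by
      intro u h1 h2
      have h3 := hauw (r - 1 - u) (by omega)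
      rw [show r - 1 - (r - 1 - u) = u from by omega] at h3
      exact h3
    have hak : a k = (s:ℤ) - 1 - ((r - 2 - k : ℕ):ℤ) * (fq + 1) - fq := by
      have h1 : a (k+1) - a k = fq := by rw [← hksmall]; rfl
      have h2 := hau (k+1) le_rfl (by omega)
      rw [show r - 1 - (k+1) = r - 2 - k from by omega] at h2
      linarith
    have hedge : a (r-2) + 1 < a (r-2+1) := by
      have h1 : a (r-2+1) - a (r-2) = fq + 1 := by rw [← hLbig]; rfl
      omega
    have hkey := keyUp hP3 hadm hmin (k+1) (r-2) (by omega) (by omega) (by omega) hedge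
    have hYY4 : YY p r a (k+1) (r-2) = ∑ u ∈ Finset.Icc (k+1) (r-2), (p:ℝ) ^ (a u - a (r-1)) := by
      unfold YY
      have hinner : ∀ u ∈ Finset.range r,
          (∑ v ∈ Finset.range r, if k+1 ≤ u ∧ u ≤ r-2 ∧ r-2 < v then (p:ℝ) ^ (a u - a v) else 0)
          = if k+1 ≤ u ∧ u ≤ r-2 then (p:ℝ) ^ (a u - a (r-1)) else 0 := by
        intro u hu
        rw [Finset.sum_eq_single_of_mem (r-1) (Finset.mem_range.mpr (by omega))
          (fun v hv hvne => if_neg (by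
            have := Finset.mem_range.mp hv
            omega))]
        by_cases hc : k+1 ≤ u ∧ u ≤ r-2
        · rw [if_pos (⟨hc.1, hc.2, by omega⟩ : k+1 ≤ u ∧ u ≤ r-2 ∧ r-2 < r-1), if_pos hc]
        · rw [if_neg (by omega), if_neg hc]
      rw [Finset.sum_congr rfl hinner]
      exact sum_range_if_eq_Icc (by omega : r-2 < r) _ _ (fun u hu => Iff.rfl)
    have hS2 : (p:ℝ) * ∑ u ∈ Finset.Icc (k+1) (r-2), (p:ℝ) ^ (a u - a (r-1))
        = ∑ v ∈ Finset.Icc (k+1) (r-2), (p:ℝ) ^ (a k - a v) := by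
      rw [Finset.mul_sum]
      apply Finset.sum_nbij' (i := fun u => k + (r-1) - u) (j := fun v => k + (r-1) - v)
      · intro u hu; simp only [Finset.mem_Icc] at *; omega
      · intro v hv; simp only [Finset.mem_Icc] at *; omega
      · intro u hu; simp only [Finset.mem_Icc] at hu; omega
      · intro v hv; simp only [Finset.mem_Icc] at hv; omega
      · intro u hu
        simp only [Finset.mem_Icc] at hu
        rw [hadm.2.1, hau u hu.1 (by omega), hau (k + (r-1) - u) (by omega) (by omega), hak]
        rw [show ((r - 1 - u : ℕ):ℤ) = (r:ℤ) - 1 - u from by omega,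
            show ((r - 1 - (k + (r-1) - u) : ℕ):ℤ) = (u:ℤ) - k from by omega,
            show ((r - 2 - k : ℕ):ℤ) = (r:ℤ) - 2 - k from by omega]
        rw [show (p:ℝ) * (p:ℝ) ^ ((s:ℤ) - 1 - ((r:ℤ) - 1 - u) * (fq+1) - ((s:ℤ) - 1))
            = (p:ℝ) ^ ((1:ℤ) + ((s:ℤ) - 1 - ((r:ℤ) - 1 - u) * (fq+1) - ((s:ℤ) - 1)))
          from by rw [zpow_add₀ hPne, zpow_one]]
        congr 1
        ring
    have hXlow : (∑ v ∈ Finset.Icc (k+1) (r-2), (p:ℝ) ^ (a k - a v)) + (p:ℝ) ^ (a (k-1) - a (k+1))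
        ≤ XX p r a (k+1) (r-2) := by
      unfold XX
      have h1 : ∀ u ∈ Finset.range r,
          ((if u = k then ∑ v ∈ Finset.Icc (k+1) (r-2), (p:ℝ) ^ (a k - a v) else 0)
            + (if u = k-1 then (p:ℝ) ^ (a (k-1) - a (k+1)) else 0))
          ≤ ∑ v ∈ Finset.range r, if u < k+1 ∧ k+1 ≤ v ∧ v ≤ r-2 then (p:ℝ) ^ (a u - a v) else 0 := by
        intro u hu
        by_cases h2 : u = k
        · subst h2
          rw [if_pos rfl, if_neg (by omega), add_zero]
          rw [sum_range_if_eq_Icc (lo := k+1) (show r-2 < r by omega)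
            (fun v => (p:ℝ) ^ (a k - a v)) _ (fun v hv => by omega)]
        · by_cases h3 : u = k-1
          · subst h3
            rw [if_neg (by omega), if_pos rfl, zero_add]
            have hterm := Finset.single_le_sum
              (f := fun v => if k-1 < k+1 ∧ k+1 ≤ v ∧ v ≤ r-2 then (p:ℝ) ^ (a (k-1) - a v) else 0)
              (fun i _ => ite_zpow_nonneg hP0.le _ _)
              (Finset.mem_range.mpr (show k+1 < r by omega))
            simpa only [if_pos (show k-1 < k+1 ∧ k+1 ≤ k+1 ∧ k+1 ≤ r-2
              from ⟨by omega, le_rfl, by omega⟩)] using hterm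
          · rw [if_neg h2, if_neg h3, add_zero]
            exact Finset.sum_nonneg fun v _ => ite_zpow_nonneg hP0.le _ _
      have h2 := Finset.sum_le_sum h1
      rw [Finset.sum_add_distrib] at h2
      rw [Finset.sum_ite_eq' (Finset.range r) k
            (fun _ => ∑ v ∈ Finset.Icc (k+1) (r-2), (p:ℝ) ^ (a k - a v)),
          Finset.sum_ite_eq' (Finset.range r) (k-1)
            (fun _ => (p:ℝ) ^ (a (k-1) - a (k+1))),
          if_pos (Finset.mem_range.mpr (show k < r by omega)),
          if_pos (Finset.mem_range.mpr (show k-1 < r by omega))] at h2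
      exact h2
    have hposx : (0:ℝ) < (p:ℝ) ^ (a (k-1) - a (k+1)) := zpow_pos hP0 _
    rw [hYY4] at hkey
    rw [hS2] at hkey
    linarith [hXlow, hkey, hposx]
  exact ⟨part1, part2, part3, part4⟩
end

section
/- Let p ≥ 3 be a prime and let 3 ≤ r < s be integers with (r-1) ∤ (s-1), and let g be the least positive residue of s-1 modulo r-1. Suppose d ∈ Biv*(s,r) satisfies h_p(δ^{-1}(d)) = min h_p and 2g ≥ r-1. Then η_max(d) = 1; that is, every maximal block of consecutive entries [q] in d is a singleton, so d contains exactly r-g-1 entries [q], no two of them adjacent, and d contains exactly w = r-g-2 maximal [q+1]-blocks, whose average length is q_2 = g/(r-g-2). -/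
/-- `δ⁻¹(d) = (0, d₁, d₁+d₂, …)`: the exponent tuple with delta vector `d`. -/
def deltaInv (d : ℕ → ℤ) (i : ℕ) : ℤ := ∑ j ∈ Finset.range i, d j

/-- `IsMaxRun n d v i l`: within the vector `(d 0, …, d (n-1))`, the entries
`d i, …, d (i+l-1)` form a maximal block of consecutive entries equal to `v`
(of length `l ≥ 1`). -/
def IsMaxRun (n : ℕ) (d : ℕ → ℤ) (v : ℤ) (i l : ℕ) : Prop :=
  0 < l ∧ i + l ≤ n ∧ (∀ k < l, d (i + k) = v) ∧
    (0 < i → d (i - 1) ≠ v) ∧ (i + l < n → d (i + l) ≠ v)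


def LexLT (f g : ℕ → ℤ) : Prop := ∃ t, (∀ s < t, f s = g s) ∧ f t < g t

def wpadL (w : ℕ → ℤ) (v : ℤ) (u : ℕ) : ℕ → ℤ :=
  fun t => if t < u then w (u - 1 - t) else v + 2

def wpadR (n : ℕ) (w : ℕ → ℤ) (v : ℤ) (u : ℕ) : ℕ → ℤ :=
  fun t => if u + 2 + t < n then w (u + 2 + t) else v + 2

def NoViol (n : ℕ) (w : ℕ → ℤ) (v : ℤ) : Prop :=
  (∀ u, u + 1 < n → w u = v → w (u+1) = v + 1 →
      ¬ LexLT (wpadL w v u) (wpadR n w v u)) ∧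
  (∀ u, u + 1 < n → w u = v + 1 → w (u+1) = v →
      ¬ LexLT (wpadR n w v u) (wpadL w v u))

def Factor00 (k n : ℕ) (w : ℕ → ℤ) (v : ℤ) (i : ℕ) : Prop :=
  i + 2*k + 3 < n ∧ w i = v ∧ w (i+1) = v ∧
  (∀ s < k, w (i+2+2*s) = v+1 ∧ w (i+3+2*s) = v) ∧
  w (i+2*k+2) = v+1 ∧ w (i+2*k+3) = v+1

def Factor11 (k n : ℕ) (w : ℕ → ℤ) (v : ℤ) (j : ℕ) : Prop :=
  j + 2*k + 3 < n ∧ w j = v+1 ∧ w (j+1) = v+1 ∧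
  (∀ s < k, w (j+2+2*s) = v ∧ w (j+3+2*s) = v+1) ∧
  w (j+2*k+2) = v ∧ w (j+2*k+3) = v

lemma geom_bound (x : ℝ) (hx0 : 0 ≤ x) (hx : x ≤ 1/3) (m : ℕ) :
    ∑ j ∈ Finset.range m, x ^ j ≤ 3 / 2 := by
  induction m with
  | zero => simp; norm_num
  | succ m ih =>
      have h := geom_sum_succ (x := x) (n := m)
      rw [h]
      have hnn : (0:ℝ) ≤ ∑ j ∈ Finset.range m, x ^ j :=
        Finset.sum_nonneg fun j _ => pow_nonneg hx0 j
      nlinarith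

lemma key (P : ℝ) (hP : 3 ≤ P) (M N t : ℕ) (A B : ℕ → ℤ)
    (hA0 : A 0 = 0) (hB0 : B 0 = 0)
    (hBgap : ∀ s, s + 1 < N → 1 ≤ B (s+1) - B s)
    (heq : ∀ s < t, A (s+1) - A s = B (s+1) - B s)
    (htM : t + 1 < M)
    (hcase : N = t + 1 ∨ (t + 1 < N ∧ A (t+1) - A t + 1 ≤ B (t+1) - B t)) :
    ∑ s ∈ Finset.range N, P ^ (-B s) < ∑ s ∈ Finset.range M, P ^ (-A s) := by
  have hP0 : (0:ℝ) < P := by linarith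
  have hP1 : (1:ℝ) ≤ P := by linarith
  have hAB : ∀ s ≤ t, A s = B s := by
    intro s hs
    induction s with
    | zero => rw [hA0, hB0]
    | succ s ih =>
        have h1 := heq s (by omega)
        have h2 := ih (by omega)
        omega
  -- RHS lower bound
  have hsub : Finset.range (t+2) ⊆ Finset.range M := by
    intro x hx; simp at hx ⊢; omega
  have hRHS : (∑ s ∈ Finset.range (t+1), P ^ (-A s)) + P ^ (-A (t+1)) ≤
      ∑ s ∈ Finset.range M, P ^ (-A s) := by
    calc (∑ s ∈ Finset.range (t+1), P ^ (-A s)) + P ^ (-A (t+1))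
        = ∑ s ∈ Finset.range (t+2), P ^ (-A s) := (Finset.sum_range_succ _ _).symm
      _ ≤ ∑ s ∈ Finset.range M, P ^ (-A s) :=
          Finset.sum_le_sum_of_subset_of_nonneg hsub
            (fun i _ _ => le_of_lt (zpow_pos hP0 _))
  have hcommon : ∑ s ∈ Finset.range (t+1), P ^ (-B s) =
      ∑ s ∈ Finset.range (t+1), P ^ (-A s) := by
    apply Finset.sum_congr rfl
    intro s hs
    simp only [Finset.mem_range] at hs
    rw [hAB s (by omega)]
  rcases hcase with hpad | ⟨hN, hlt⟩
  · rw [hpad, hcommon]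
    have : (0:ℝ) < P ^ (-A (t+1)) := zpow_pos hP0 _
    linarith
  · -- real case
    have hsplit : ∑ s ∈ Finset.range N, P ^ (-B s) =
        (∑ s ∈ Finset.range (t+1), P ^ (-B s)) +
          ∑ s ∈ Finset.Ico (t+1) N, P ^ (-B s) := by
      rw [Finset.range_eq_Ico, Finset.range_eq_Ico]
      exact (Finset.sum_Ico_consecutive (fun s => P ^ (-B s)) (by omega : 0 ≤ t+1) (by omega : t+1 ≤ N)).symm
    -- tail bound
    have hBstep : ∀ j, t+1+j < N → B (t+1) + j ≤ B (t+1+j) := by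
      intro j hj
      induction j with
      | zero => simp
      | succ j ih =>
          have h1 := hBgap (t+1+j) (by omega)
          have h2 := ih (by omega)
          have : t+1+(j+1) = (t+1+j)+1 := by omega
          rw [this]
          push_cast
          omega
    have htail : ∑ s ∈ Finset.Ico (t+1) N, P ^ (-B s) ≤
        P ^ (-B (t+1)) * (3/2) := by
      have hbd : ∀ s ∈ Finset.Ico (t+1) N, P ^ (-B s) ≤
          P ^ (-B (t+1)) * (P⁻¹) ^ (s - (t+1)) := by
        intro s hs
        simp only [Finset.mem_Ico] at hs
        have h1 : B (t+1) + (s - (t+1) : ℕ) ≤ B s := by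
          have := hBstep (s - (t+1)) (by omega)
          have he : t+1+(s-(t+1)) = s := by omega
          rwa [he] at this
        have h2 : P ^ (-B s) ≤ P ^ (-(B (t+1) + (s - (t+1) : ℕ))) :=
          zpow_le_zpow_right₀ hP1 (by omega)
        have haux : P ^ (-((s - (t+1) : ℕ) : ℤ)) = (P⁻¹) ^ (s - (t+1)) := by
          rw [zpow_neg, zpow_natCast, inv_pow]
        have h3 : P ^ (-(B (t+1) + ((s - (t+1) : ℕ) : ℤ))) =
            P ^ (-B (t+1)) * (P⁻¹) ^ (s - (t+1)) := by
          rw [neg_add, zpow_add₀ (ne_of_gt hP0), haux]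
        rw [h3] at h2
        exact h2
      calc ∑ s ∈ Finset.Ico (t+1) N, P ^ (-B s)
          ≤ ∑ s ∈ Finset.Ico (t+1) N, P ^ (-B (t+1)) * (P⁻¹) ^ (s - (t+1)) :=
            Finset.sum_le_sum hbd
        _ = P ^ (-B (t+1)) * ∑ s ∈ Finset.Ico (t+1) N, (P⁻¹) ^ (s - (t+1)) := by
            rw [Finset.mul_sum]
        _ = P ^ (-B (t+1)) * ∑ j ∈ Finset.range (N - (t+1)), (P⁻¹) ^ j := by
            congr 1
            rw [Finset.sum_Ico_eq_sum_range]
            apply Finset.sum_congr rfl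
            intro j _
            congr 1
            omega
        _ ≤ P ^ (-B (t+1)) * (3/2) := by
            apply mul_le_mul_of_nonneg_left _ (le_of_lt (zpow_pos hP0 _))
            apply geom_bound
            · positivity
            · rw [inv_le_comm₀ hP0 (by norm_num)]
              linarith
    have hBA : A (t+1) + 1 ≤ B (t+1) := by
      have := hAB t (le_refl t)
      omega
    have hfinal : P ^ (-B (t+1)) * (3/2) < P ^ (-A (t+1)) := by
      have h2 : P ^ (-B (t+1)) ≤ P ^ (-(A (t+1) + 1)) :=
        zpow_le_zpow_right₀ hP1 (by omega)
      have h3 : P ^ (-(A (t+1) + 1)) = P ^ (-A (t+1)) * P⁻¹ := by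
        rw [neg_add, zpow_add₀ (ne_of_gt hP0), zpow_neg_one]
      have h4 : (0:ℝ) < P ^ (-A (t+1)) := zpow_pos hP0 _
      have h5 : P⁻¹ ≤ 1/3 := by
        rw [inv_le_comm₀ hP0 (by norm_num)]; linarith
      rw [h3] at h2
      nlinarith
    rw [hsplit, hcommon]
    have := hRHS
    linarith





lemma deltaInv_gap (d : ℕ → ℤ) (i : ℕ) :
    deltaInv d (i+1) - deltaInv d i = d i := by
  unfold deltaInv
  rw [Finset.sum_range_succ]
  ring

lemma hp_congr (p r : ℕ) (a a' : ℕ → ℤ) (h : ∀ i < r, a i = a' i) :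
    hp p r a = hp p r a' := by
  unfold hp
  apply Finset.sum_congr rfl
  intro k hk
  apply Finset.sum_congr rfl
  intro i hi
  simp only [Finset.mem_range] at hk hi
  rw [h k hk, h i hi]

lemma hp_reflect (p r : ℕ) (a : ℕ → ℤ) (C : ℤ) :
    hp p r (fun i => C - a (r - 1 - i)) = hp p r a := by
  unfold hp
  have h1 : ∀ k ∈ Finset.range r,
      (∑ i ∈ Finset.range r, if k < i then
        (p : ℝ) ^ ((C - a (r-1-k)) - (C - a (r-1-i))) else 0) =
      ∑ i ∈ Finset.range r, if k < i then (p:ℝ) ^ (a (r-1-i) - a (r-1-k)) else 0 := by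
    intro k _
    apply Finset.sum_congr rfl
    intro i _
    congr 1
    ring_nf
  rw [Finset.sum_congr rfl h1]
  -- reflect outer
  rw [← Finset.sum_range_reflect (fun k => ∑ i ∈ Finset.range r,
        if k < i then (p:ℝ) ^ (a (r-1-i) - a (r-1-k)) else 0) r]
  have h2 : ∀ k ∈ Finset.range r,
      (∑ i ∈ Finset.range r, if (r-1-k) < i then
        (p:ℝ) ^ (a (r-1-i) - a (r-1-(r-1-k))) else 0) =
      ∑ i ∈ Finset.range r, if i < k then (p:ℝ) ^ (a i - a k) else 0 := by
    intro k hk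
    simp only [Finset.mem_range] at hk
    rw [← Finset.sum_range_reflect (fun i => if (r-1-k) < i then
        (p:ℝ) ^ (a (r-1-i) - a (r-1-(r-1-k))) else 0) r]
    apply Finset.sum_congr rfl
    intro i hi
    simp only [Finset.mem_range] at hi
    have e1 : r-1-(r-1-k) = k := by omega
    have e2 : r-1-(r-1-i) = i := by omega
    rw [e1, e2]
    by_cases h : i < k
    · rw [if_pos (by omega), if_pos h]
    · rw [if_neg (by omega), if_neg h]
  rw [Finset.sum_congr rfl h2]
  exact Finset.sum_comm

lemma sum_ite_range_Ico (r m : ℕ) (G : ℕ → ℝ) :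
    ∑ i ∈ Finset.range r, (if m < i then G i else 0) =
      ∑ i ∈ Finset.Ico (m+1) r, G i := by
  rw [← Finset.sum_filter]
  congr 1
  ext x
  simp only [Finset.mem_filter, Finset.mem_Ico, Finset.mem_range]
  omega

lemma hp_swap_eq (p r : ℕ) (a : ℕ → ℤ) (m : ℕ) (hm : 0 < m) (hmr : m + 1 < r) (e : ℤ) :
    hp p r (fun i => a i + if i = m then e else 0) - hp p r a =
      (∑ i ∈ Finset.Ico (m+1) r, ((p:ℝ) ^ (a m + e - a i) - (p:ℝ) ^ (a m - a i))) +
      (∑ k ∈ Finset.range m, ((p:ℝ) ^ (a k - (a m + e)) - (p:ℝ) ^ (a k - a m))) := by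
  unfold hp
  rw [← Finset.sum_sub_distrib]
  have hstep : ∀ k ∈ Finset.range r,
      ((∑ i ∈ Finset.range r, if k < i then
          (p:ℝ) ^ ((a k + if k = m then e else 0) - (a i + if i = m then e else 0)) else 0) -
        ∑ i ∈ Finset.range r, if k < i then (p:ℝ) ^ (a k - a i) else 0) =
      ∑ i ∈ Finset.range r, ((if k < i then
          (p:ℝ) ^ ((a k + if k = m then e else 0) - (a i + if i = m then e else 0)) else 0) -
        (if k < i then (p:ℝ) ^ (a k - a i) else 0)) := by
    intro k _
    rw [Finset.sum_sub_distrib]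
  rw [Finset.sum_congr rfl hstep]
  have hmem : m ∈ Finset.range r := Finset.mem_range.mpr (by omega)
  rw [Finset.sum_eq_add_sum_sdiff_singleton_of_mem hmem]
  congr 1
  · -- k = m row
    have h1 : ∀ i ∈ Finset.range r,
        ((if m < i then
            (p:ℝ) ^ ((a m + if m = m then e else 0) - (a i + if i = m then e else 0)) else 0) -
          (if m < i then (p:ℝ) ^ (a m - a i) else 0)) =
        (if m < i then ((p:ℝ) ^ (a m + e - a i) - (p:ℝ) ^ (a m - a i)) else 0) := by
      intro i _
      by_cases h : m < i
      · have hne : i ≠ m := by omega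
        rw [if_pos h, if_pos h, if_pos h, if_pos rfl, if_neg hne]
        ring_nf
      · rw [if_neg h, if_neg h, if_neg h]; ring
    rw [Finset.sum_congr rfl h1, sum_ite_range_Ico]
  · -- other rows
    have h2 : ∀ k ∈ Finset.range r \ {m},
        (∑ i ∈ Finset.range r, ((if k < i then
            (p:ℝ) ^ ((a k + if k = m then e else 0) - (a i + if i = m then e else 0)) else 0) -
          (if k < i then (p:ℝ) ^ (a k - a i) else 0))) =
        (if k < m then ((p:ℝ) ^ (a k - (a m + e)) - (p:ℝ) ^ (a k - a m)) else 0) := by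
      intro k hk
      simp only [Finset.mem_sdiff, Finset.mem_range, Finset.mem_singleton] at hk
      obtain ⟨hkr, hkm⟩ := hk
      rw [Finset.sum_eq_single_of_mem m (Finset.mem_range.mpr (by omega))]
      · by_cases h : k < m
        · rw [if_pos h, if_pos h, if_pos h, if_pos rfl, if_neg hkm]
          ring_nf
        · rw [if_neg h, if_neg h, if_neg h]; ring
      · intro i _ him
        by_cases h : k < i
        · rw [if_pos h, if_pos h, if_neg him, if_neg hkm]
          ring
        · rw [if_neg h, if_neg h]; ring
    rw [Finset.sum_congr rfl h2]
    have hsub : Finset.range m ⊆ Finset.range r \ {m} := by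
      intro x hx
      simp only [Finset.mem_range, Finset.mem_sdiff, Finset.mem_singleton] at hx ⊢
      omega
    rw [← Finset.sum_subset hsub (fun x hx hx2 => by
      simp only [Finset.mem_range, Finset.mem_sdiff, Finset.mem_singleton] at hx hx2
      rw [if_neg (by omega)])]
    apply Finset.sum_congr rfl
    intro k hk
    rw [if_pos (Finset.mem_range.mp hk)]

lemma hp_swap_up (p r : ℕ) (hp3 : 3 ≤ p) (a : ℕ → ℤ) (m : ℕ) (hm : 0 < m) (hmr : m + 1 < r)
    (hlt : (p:ℝ) * (∑ i ∈ Finset.Ico (m+1) r, (p:ℝ) ^ (a m - a i)) <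
      ∑ k ∈ Finset.range m, (p:ℝ) ^ (a k - a m)) :
    hp p r (fun i => a i + if i = m then 1 else 0) < hp p r a := by
  have hP3 : (3:ℝ) ≤ (p:ℝ) := by exact_mod_cast hp3
  have hP0 : (0:ℝ) < p := by linarith
  have hPne : (p:ℝ) ≠ 0 := ne_of_gt hP0
  have heq := hp_swap_eq p r a m hm hmr 1
  have hW : ∀ i ∈ Finset.Ico (m+1) r, (p:ℝ)^(a m + 1 - a i) - (p:ℝ)^(a m - a i)
      = ((p:ℝ) - 1) * (p:ℝ)^(a m - a i) := by
    intro i _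
    have h1 : a m + 1 - a i = (a m - a i) + 1 := by ring
    rw [h1, zpow_add₀ hPne, zpow_one]; ring
  have hX : ∀ k ∈ Finset.range m, (p:ℝ)^(a k - (a m + 1)) - (p:ℝ)^(a k - a m)
      = ((p:ℝ)⁻¹ - 1) * (p:ℝ)^(a k - a m) := by
    intro k _
    have h1 : a k - (a m + 1) = (a k - a m) + (-1) := by ring
    rw [h1, zpow_add₀ hPne, zpow_neg_one]; ring
  rw [Finset.sum_congr rfl hW, Finset.sum_congr rfl hX, ← Finset.mul_sum, ← Finset.mul_sum] at heq
  set W := ∑ i ∈ Finset.Ico (m+1) r, (p:ℝ)^(a m - a i) with hWdef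
  set X := ∑ k ∈ Finset.range m, (p:ℝ)^(a k - a m) with hXdef
  have hpos : 0 < 1 - (p:ℝ)⁻¹ := by
    have h5 : (p:ℝ)⁻¹ ≤ 1/3 := by
      rw [inv_le_comm₀ hP0 (by norm_num)]; linarith
    linarith
  have h1 : (1 - (p:ℝ)⁻¹) * ((p:ℝ)*W) < (1 - (p:ℝ)⁻¹) * X :=
    mul_lt_mul_of_pos_left hlt hpos
  have h2 : (1 - (p:ℝ)⁻¹) * ((p:ℝ)*W) = ((p:ℝ) - 1) * W := by
    field_simp
  linarith

lemma hp_swap_down (p r : ℕ) (hp3 : 3 ≤ p) (a : ℕ → ℤ) (m : ℕ) (hm : 0 < m) (hmr : m + 1 < r)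
    (hlt : (p:ℝ) * (∑ k ∈ Finset.range m, (p:ℝ) ^ (a k - a m)) <
      ∑ i ∈ Finset.Ico (m+1) r, (p:ℝ) ^ (a m - a i)) :
    hp p r (fun i => a i + if i = m then -1 else 0) < hp p r a := by
  have hP3 : (3:ℝ) ≤ (p:ℝ) := by exact_mod_cast hp3
  have hP0 : (0:ℝ) < p := by linarith
  have hPne : (p:ℝ) ≠ 0 := ne_of_gt hP0
  have heq := hp_swap_eq p r a m hm hmr (-1)
  have hW : ∀ i ∈ Finset.Ico (m+1) r, (p:ℝ)^(a m + (-1) - a i) - (p:ℝ)^(a m - a i)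
      = ((p:ℝ)⁻¹ - 1) * (p:ℝ)^(a m - a i) := by
    intro i _
    have h1 : a m + (-1) - a i = (a m - a i) + (-1) := by ring
    rw [h1, zpow_add₀ hPne, zpow_neg_one]; ring
  have hX : ∀ k ∈ Finset.range m, (p:ℝ)^(a k - (a m + (-1))) - (p:ℝ)^(a k - a m)
      = ((p:ℝ) - 1) * (p:ℝ)^(a k - a m) := by
    intro k _
    have h1 : a k - (a m + (-1)) = (a k - a m) + 1 := by ring
    rw [h1, zpow_add₀ hPne, zpow_one]; ring
  rw [Finset.sum_congr rfl hW, Finset.sum_congr rfl hX, ← Finset.mul_sum, ← Finset.mul_sum] at heq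
  set W := ∑ i ∈ Finset.Ico (m+1) r, (p:ℝ)^(a m - a i) with hWdef
  set X := ∑ k ∈ Finset.range m, (p:ℝ)^(a k - a m) with hXdef
  have hpos : 0 < 1 - (p:ℝ)⁻¹ := by
    have h5 : (p:ℝ)⁻¹ ≤ 1/3 := by
      rw [inv_le_comm₀ hP0 (by norm_num)]; linarith
    linarith
  have h1 : (1 - (p:ℝ)⁻¹) * ((p:ℝ)*X) < (1 - (p:ℝ)⁻¹) * W :=
    mul_lt_mul_of_pos_left hlt hpos
  have h2 : (1 - (p:ℝ)⁻¹) * ((p:ℝ)*X) = ((p:ℝ) - 1) * X := by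
    field_simp
  linarith


lemma noviol_of_min (p s r : ℕ) (hp3 : 3 ≤ p) (hr : 3 ≤ r)
    (fq : ℤ) (hfq1 : 1 ≤ fq) (d : ℕ → ℤ)
    (hmem : ∀ j < r - 1, d j = fq ∨ d j = fq + 1)
    (hsum : ∑ j ∈ Finset.range (r-1), d j = (s:ℤ) - 1)
    (hmin : ∀ b : ℕ → ℤ, Admissible s r b → hp p r (deltaInv d) ≤ hp p r b) :
    NoViol (r-1) d fq := by
  have hP3 : (3:ℝ) ≤ (p:ℝ) := by exact_mod_cast hp3
  have hP0 : (0:ℝ) < p := by linarith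
  have hPne : (p:ℝ) ≠ 0 := ne_of_gt hP0
  set a : ℕ → ℤ := deltaInv d with ha
  have hgap : ∀ i, a (i+1) - a i = d i := fun i => deltaInv_gap d i
  have hd1 : ∀ j, j < r - 1 → 1 ≤ d j := by
    intro j hj; rcases hmem j hj with h | h <;> omega
  constructor
  · -- C1 : 01 boundary
    intro u hu h0 h1 hlex
    obtain ⟨t, hpre, hlt⟩ := hlex
    -- realness
    have hRle : ∀ x, wpadR (r-1) d fq u x ≤ fq + 2 := by
      intro x
      unfold wpadR
      split
      · rcases hmem (u+2+x) (by omega) with h | h <;> omega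
      · omega
    have htu : t < u := by
      by_contra hcon
      have : wpadL d fq u t = fq + 2 := by unfold wpadL; rw [if_neg hcon]
      have := hRle t
      omega
    have hsu : ∀ s_, s_ < t → s_ < u := fun s_ hs => by omega
    have hLval : ∀ x, x < u → wpadL d fq u x = d (u-1-x) := by
      intro x hx; unfold wpadL; rw [if_pos hx]
    have hRreal : ∀ s_, s_ < t → u+2+s_ < r-1 := by
      intro s_ hs
      by_contra hcon
      have h2 : wpadR (r-1) d fq u s_ = fq + 2 := by unfold wpadR; rw [if_neg hcon]
      have h3 := hpre s_ hs
      rw [hLval s_ (hsu s_ hs)] at h3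
      rcases hmem (u-1-s_) (by omega) with h | h <;> omega
    have hRval : ∀ x, u+2+x < r-1 → wpadR (r-1) d fq u x = d (u+2+x) := by
      intro x hx; unfold wpadR; rw [if_pos hx]
    -- key sequences
    set A : ℕ → ℤ := fun s_ => a (u+1) - a ((u+1)-1-s_) - fq with hA
    set B : ℕ → ℤ := fun s_ => a ((u+1)+1+s_) - a (u+1) - (fq+1) with hB
    set N := r - u - 2 with hN
    have hgapA : ∀ s_, s_ < u → A (s_+1) - A s_ = d (u-1-s_) := by
      intro s_ hs
      have e1 : (u+1)-1-s_ = (u-1-s_)+1 := by omega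
      have e2 : (u+1)-1-(s_+1) = u-1-s_ := by omega
      simp only [hA, e1, e2]
      have := hgap (u-1-s_)
      omega
    have hgapB : ∀ s_, B (s_+1) - B s_ = d (u+2+s_) := by
      intro s_
      have e1 : (u+1)+1+(s_+1) = (u+2+s_)+1 := by omega
      have e2 : (u+1)+1+s_ = u+2+s_ := by omega
      simp only [hB, e1, e2]
      have := hgap (u+2+s_)
      omega
    have hkey : ∑ s_ ∈ Finset.range N, (p:ℝ) ^ (-B s_) <
        ∑ s_ ∈ Finset.range (u+1), (p:ℝ) ^ (-A s_) := by
      apply key (p:ℝ) hP3 (u+1) N t A B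
      · simp only [hA]
        have e : (u+1)-1-0 = u := by omega
        rw [e]
        have := hgap u
        omega
      · simp only [hB]
        have e : (u+1)+1+0 = (u+1)+1 := by omega
        rw [e]
        have := hgap (u+1)
        omega
      · intro s_ hs
        rw [hgapB s_]
        exact hd1 (u+2+s_) (by omega)
      · intro s_ hs
        rw [hgapA s_ (hsu s_ hs), hgapB s_]
        have h3 := hpre s_ hs
        rw [hLval s_ (hsu s_ hs), hRval s_ (hRreal s_ hs)] at h3
        omega
      · omega
      · by_cases hreal : u+2+t < r-1
        · right
          constructor
          · omega
          · rw [hgapA t htu, hgapB t]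
            rw [hLval t htu, hRval t hreal] at hlt
            rcases hmem (u-1-t) (by omega) with h | h <;>
              rcases hmem (u+2+t) (by omega) with h' | h' <;> omega
        · left
          have h4 : u + 2 + t ≤ r - 1 := by
            rcases Nat.eq_zero_or_pos t with h | h
            · omega
            · have := hRreal (t-1) (by omega); omega
          omega
    -- translate to swap condition
    have hXeq : ∑ k ∈ Finset.range (u+1), (p:ℝ) ^ (a k - a (u+1)) =
        (p:ℝ) ^ (-fq) * ∑ s_ ∈ Finset.range (u+1), (p:ℝ) ^ (-A s_) := by
      rw [← Finset.sum_range_reflect (fun k => (p:ℝ) ^ (a k - a (u+1))) (u+1), Finset.mul_sum]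
      apply Finset.sum_congr rfl
      intro s_ _
      rw [← zpow_add₀ hPne]
      congr 1
      simp only [hA]; ring
    have hWeq : ∑ i ∈ Finset.Ico ((u+1)+1) r, (p:ℝ) ^ (a (u+1) - a i) =
        (p:ℝ) ^ (-(fq+1)) * ∑ s_ ∈ Finset.range N, (p:ℝ) ^ (-B s_) := by
      rw [Finset.sum_Ico_eq_sum_range, Finset.mul_sum]
      have e : r - ((u+1)+1) = N := by omega
      rw [e]
      apply Finset.sum_congr rfl
      intro s_ _
      rw [← zpow_add₀ hPne]
      congr 1
      simp only [hB]; ring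
    have hswapcond : (p:ℝ) * (∑ i ∈ Finset.Ico ((u+1)+1) r, (p:ℝ) ^ (a (u+1) - a i)) <
        ∑ k ∈ Finset.range (u+1), (p:ℝ) ^ (a k - a (u+1)) := by
      rw [hXeq, hWeq]
      have e : (p:ℝ) * ((p:ℝ) ^ (-(fq+1)) * ∑ s_ ∈ Finset.range N, (p:ℝ) ^ (-B s_)) =
          (p:ℝ) ^ (-fq) * ∑ s_ ∈ Finset.range N, (p:ℝ) ^ (-B s_) := by
        rw [← mul_assoc]
        congr 1
        rw [show -fq = 1 + (-(fq+1)) by ring, zpow_add₀ hPne, zpow_one]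
      rw [e]
      exact mul_lt_mul_of_pos_left hkey (zpow_pos hP0 _)
    have hdec := hp_swap_up p r hp3 a (u+1) (by omega) (by omega) hswapcond
    have hadm : Admissible s r (fun i => a i + if i = (u+1) then 1 else 0) := by
      refine ⟨?_, ?_, ?_⟩
      · show a 0 + (if (0:ℕ) = (u+1) then (1:ℤ) else 0) = 0
        rw [if_neg (by omega : ¬ (0:ℕ) = (u+1))]
        simp [ha, deltaInv]
      · show a (r-1) + (if r - 1 = (u+1) then (1:ℤ) else 0) = (s:ℤ) - 1
        rw [if_neg (by omega : ¬ r - 1 = (u+1))]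
        simpa [ha, deltaInv] using hsum
      · intro i hi
        have hgapi := hgap i
        show a i + (if i = (u+1) then (1:ℤ) else 0) < a (i+1) + (if i + 1 = (u+1) then (1:ℤ) else 0)
        have hdi := hd1 i (by omega)
        by_cases hc1 : i + 1 = (u+1)
        · have hc2 : ¬ i = (u+1) := by omega
          rw [if_pos hc1, if_neg hc2]
          omega
        · by_cases hc2 : i = (u+1)
          · rw [if_neg hc1, if_pos hc2]
            rw [hc2] at hgapi ⊢
            omega
          · rw [if_neg hc1, if_neg hc2]
            omega
    have := hmin _ hadm
    linarith
  · -- C2 : 10 boundary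
    intro u hu h0 h1 hlex
    obtain ⟨t, hpre, hlt⟩ := hlex
    have hLle : ∀ x, wpadL d fq u x ≤ fq + 2 := by
      intro x
      unfold wpadL
      split
      · rcases hmem (u-1-x) (by omega) with h | h <;> omega
      · omega
    have htreal : u+2+t < r-1 := by
      by_contra hcon
      have : wpadR (r-1) d fq u t = fq + 2 := by unfold wpadR; rw [if_neg hcon]
      have := hLle t
      omega
    have hRval : ∀ x, u+2+x < r-1 → wpadR (r-1) d fq u x = d (u+2+x) := by
      intro x hx; unfold wpadR; rw [if_pos hx]
    have hLval : ∀ x, x < u → wpadL d fq u x = d (u-1-x) := by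
      intro x hx; unfold wpadL; rw [if_pos hx]
    have hsu : ∀ s_, s_ < t → s_ < u := by
      intro s_ hs
      by_contra hcon
      have h2 : wpadL d fq u s_ = fq + 2 := by unfold wpadL; rw [if_neg hcon]
      have h3 := hpre s_ hs
      rw [h2, hRval s_ (by omega)] at h3
      rcases hmem (u+2+s_) (by omega) with h | h <;> omega
    set A : ℕ → ℤ := fun s_ => a ((u+1)+1+s_) - a (u+1) - fq with hA
    set B : ℕ → ℤ := fun s_ => a (u+1) - a ((u+1)-1-s_) - (fq+1) with hB
    set M := r - u - 2 with hM
    have hgapA : ∀ s_, A (s_+1) - A s_ = d (u+2+s_) := by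
      intro s_
      have e1 : (u+1)+1+(s_+1) = (u+2+s_)+1 := by omega
      have e2 : (u+1)+1+s_ = u+2+s_ := by omega
      simp only [hA, e1, e2]
      have := hgap (u+2+s_)
      omega
    have hgapB : ∀ s_, s_ < u → B (s_+1) - B s_ = d (u-1-s_) := by
      intro s_ hs
      have e1 : (u+1)-1-s_ = (u-1-s_)+1 := by omega
      have e2 : (u+1)-1-(s_+1) = u-1-s_ := by omega
      simp only [hB, e1, e2]
      have := hgap (u-1-s_)
      omega
    have hkey : ∑ s_ ∈ Finset.range (u+1), (p:ℝ) ^ (-B s_) <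
        ∑ s_ ∈ Finset.range M, (p:ℝ) ^ (-A s_) := by
      apply key (p:ℝ) hP3 M (u+1) t A B
      · simp only [hA]
        have e : (u+1)+1+0 = (u+1)+1 := by omega
        rw [e]
        have := hgap (u+1)
        omega
      · simp only [hB]
        have e : (u+1)-1-0 = u := by omega
        rw [e]
        have := hgap u
        omega
      · intro s_ hs
        rw [hgapB s_ (by omega)]
        exact hd1 (u-1-s_) (by omega)
      · intro s_ hs
        rw [hgapA s_, hgapB s_ (hsu s_ hs)]
        have h3 := hpre s_ hs
        rw [hLval s_ (hsu s_ hs), hRval s_ (by omega)] at h3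
        omega
      · omega
      · by_cases hreal : t < u
        · right
          constructor
          · omega
          · rw [hgapA t, hgapB t hreal]
            rw [hLval t hreal, hRval t htreal] at hlt
            rcases hmem (u-1-t) (by omega) with h | h <;>
              rcases hmem (u+2+t) (by omega) with h' | h' <;> omega
        · left
          have htle : t ≤ u := by
            rcases Nat.eq_zero_or_pos t with h | h
            · omega
            · have := hsu (t-1) (by omega); omega
          omega
    have hXeq : ∑ k ∈ Finset.range (u+1), (p:ℝ) ^ (a k - a (u+1)) =
        (p:ℝ) ^ (-(fq+1)) * ∑ s_ ∈ Finset.range (u+1), (p:ℝ) ^ (-B s_) := by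
      rw [← Finset.sum_range_reflect (fun k => (p:ℝ) ^ (a k - a (u+1))) (u+1), Finset.mul_sum]
      apply Finset.sum_congr rfl
      intro s_ _
      rw [← zpow_add₀ hPne]
      congr 1
      simp only [hB]; ring
    have hWeq : ∑ i ∈ Finset.Ico ((u+1)+1) r, (p:ℝ) ^ (a (u+1) - a i) =
        (p:ℝ) ^ (-fq) * ∑ s_ ∈ Finset.range M, (p:ℝ) ^ (-A s_) := by
      rw [Finset.sum_Ico_eq_sum_range, Finset.mul_sum]
      have e : r - ((u+1)+1) = M := by omega
      rw [e]
      apply Finset.sum_congr rfl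
      intro s_ _
      rw [← zpow_add₀ hPne]
      congr 1
      simp only [hA]; ring
    have hswapcond : (p:ℝ) * (∑ k ∈ Finset.range (u+1), (p:ℝ) ^ (a k - a (u+1))) <
        ∑ i ∈ Finset.Ico ((u+1)+1) r, (p:ℝ) ^ (a (u+1) - a i) := by
      rw [hXeq, hWeq]
      have e : (p:ℝ) * ((p:ℝ) ^ (-(fq+1)) * ∑ s_ ∈ Finset.range (u+1), (p:ℝ) ^ (-B s_)) =
          (p:ℝ) ^ (-fq) * ∑ s_ ∈ Finset.range (u+1), (p:ℝ) ^ (-B s_) := by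
        rw [← mul_assoc]
        congr 1
        rw [show -fq = 1 + (-(fq+1)) by ring, zpow_add₀ hPne, zpow_one]
      rw [e]
      exact mul_lt_mul_of_pos_left hkey (zpow_pos hP0 _)
    have hdec := hp_swap_down p r hp3 a (u+1) (by omega) (by omega) hswapcond
    have hadm : Admissible s r (fun i => a i + if i = (u+1) then -1 else 0) := by
      refine ⟨?_, ?_, ?_⟩
      · show a 0 + (if (0:ℕ) = (u+1) then (-1:ℤ) else 0) = 0
        rw [if_neg (by omega : ¬ (0:ℕ) = (u+1))]
        simp [ha, deltaInv]
      · show a (r-1) + (if r - 1 = (u+1) then (-1:ℤ) else 0) = (s:ℤ) - 1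
        rw [if_neg (by omega : ¬ r - 1 = (u+1))]
        simpa [ha, deltaInv] using hsum
      · intro i hi
        have hgapi := hgap i
        show a i + (if i = (u+1) then (-1:ℤ) else 0) < a (i+1) + (if i + 1 = (u+1) then (-1:ℤ) else 0)
        have hdi := hd1 i (by omega)
        by_cases hc1 : i + 1 = (u+1)
        · have hc2 : ¬ i = (u+1) := by omega
          rw [if_pos hc1, if_neg hc2]
          have e : i = u := by omega
          rw [e] at hgapi ⊢
          omega
        · by_cases hc2 : i = (u+1)
          · rw [if_neg hc1, if_pos hc2]
            omega
          · rw [if_neg hc1, if_neg hc2]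
            omega
    have := hmin _ hadm
    linarith

lemma wpad_rev_L (n : ℕ) (w : ℕ → ℤ) (v : ℤ) (u : ℕ) (hu : u + 1 < n) :
    wpadL (fun x => w (n-1-x)) v u = wpadR n w v (n-2-u) := by
  funext t
  unfold wpadL wpadR
  by_cases h : t < u
  · rw [if_pos h, if_pos (by omega)]
    show w (n-1-(u-1-t)) = w (n-2-u+2+t)
    congr 1
    omega
  · rw [if_neg h, if_neg (by omega)]

lemma wpad_rev_R (n : ℕ) (w : ℕ → ℤ) (v : ℤ) (u : ℕ) (hu : u + 1 < n) :
    wpadR n (fun x => w (n-1-x)) v u = wpadL w v (n-2-u) := by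
  funext t
  unfold wpadL wpadR
  by_cases h : u + 2 + t < n
  · rw [if_pos h, if_pos (by omega)]
    show w (n-1-(u+2+t)) = w (n-2-u-1-t)
    congr 1
    omega
  · rw [if_neg h, if_neg (by omega)]

lemma noViol_rev (n : ℕ) (w : ℕ → ℤ) (v : ℤ) (h : NoViol n w v) :
    NoViol n (fun x => w (n-1-x)) v := by
  obtain ⟨h1, h2⟩ := h
  constructor
  · intro u hu hv0 hv1 hlex
    rw [wpad_rev_L n w v u hu, wpad_rev_R n w v u hu] at hlex
    apply h2 (n-2-u) (by omega) ?_ ?_ hlex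
    · show w (n-2-u) = v + 1
      have e : n-2-u = n-1-(u+1) := by omega
      rw [e]
      exact hv1
    · show w (n-2-u+1) = v
      have e : n-2-u+1 = n-1-u := by omega
      rw [e]
      exact hv0
  · intro u hu hv0 hv1 hlex
    rw [wpad_rev_L n w v u hu, wpad_rev_R n w v u hu] at hlex
    apply h1 (n-2-u) (by omega) ?_ ?_ hlex
    · show w (n-2-u) = v
      have e : n-2-u = n-1-(u+1) := by omega
      rw [e]
      exact hv1
    · show w (n-2-u+1) = v + 1
      have e : n-2-u+1 = n-1-u := by omega
      rw [e]
      exact hv0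

lemma factor11_rev (k n : ℕ) (w : ℕ → ℤ) (v : ℤ) (j : ℕ) (h : Factor11 k n w v j) :
    Factor00 k n (fun x => w (n-1-x)) v (n-1-(j+2*k+3)) := by
  obtain ⟨hb, h0, h1, hmid, h2, h3⟩ := h
  have hrev : ∀ m, m ≤ 2*k+3 → (fun x => w (n-1-x)) (n-1-(j+2*k+3)+m) = w (j+(2*k+3-m)) := by
    intro m hm
    show w (n-1-(n-1-(j+2*k+3)+m)) = _
    congr 1
    omega
  refine ⟨by omega, ?_, ?_, ?_, ?_, ?_⟩
  · have e0 : n-1-(j+2*k+3) = n-1-(j+2*k+3)+0 := by omega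
    rw [e0, hrev 0 (by omega)]
    have e : j+(2*k+3-0) = j+2*k+3 := by omega
    rw [e]; exact h3
  · rw [hrev 1 (by omega)]
    have e : j+(2*k+3-1) = j+2*k+2 := by omega
    rw [e]; exact h2
  · intro s hs
    constructor
    · have e0 : n-1-(j+2*k+3)+2+2*s = n-1-(j+2*k+3)+(2+2*s) := by omega
      rw [e0, hrev (2+2*s) (by omega)]
      have e : j+(2*k+3-(2+2*s)) = j+3+2*(k-1-s) := by omega
      rw [e]; exact (hmid (k-1-s) (by omega)).2
    · have e0 : n-1-(j+2*k+3)+3+2*s = n-1-(j+2*k+3)+(3+2*s) := by omega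
      rw [e0, hrev (3+2*s) (by omega)]
      have e : j+(2*k+3-(3+2*s)) = j+2+2*(k-1-s) := by omega
      rw [e]; exact (hmid (k-1-s) (by omega)).1
  · have e0 : n-1-(j+2*k+3)+2*k+2 = n-1-(j+2*k+3)+(2*k+2) := by omega
    rw [e0, hrev (2*k+2) (by omega)]
    have e : j+(2*k+3-(2*k+2)) = j+1 := by omega
    rw [e]; exact h1
  · have e0 : n-1-(j+2*k+3)+2*k+3 = n-1-(j+2*k+3)+(2*k+3) := by omega
    rw [e0, hrev (2*k+3) (by omega)]
    have e : j+(2*k+3-(2*k+3)) = j := by omega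
    rw [e]; exact h0

lemma comb : ∀ k n (w : ℕ → ℤ) (v : ℤ), (∀ j < n, w j = v ∨ w j = v+1) → NoViol n w v →
    ∀ i, Factor00 k n w v i → False := by
  intro k
  induction k using Nat.strong_induction_on with
  | _ k IH =>
    intro n w v hmem hnv i hf
    obtain ⟨hb, h0, h1, hmid, h2, h3⟩ := hf
    rcases Nat.eq_zero_or_pos k with hk0 | hkpos
    · -- base : factor 0011
      subst hk0
      apply hnv.1 (i+1) (by omega) h1 (by
        show w (i+1+1) = v + 1
        have e : i+1+1 = i+2*0+2 := by omega
        rw [e]; exact h2)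
      refine ⟨0, fun s hs => absurd hs (by omega), ?_⟩
      unfold wpadL wpadR
      rw [if_pos (by omega : 0 < i+1), if_pos (by omega : i+1+2+0 < n)]
      have e1 : i+1-1-0 = i := by omega
      have e2 : i+1+2+0 = i+2*0+3 := by omega
      rw [e1, e2, h0, h3]
      omega
    · -- step : k ≥ 1
      have hmidval : ∀ m, 2 ≤ m → m ≤ 2*k+1 → w (i+m) = if m % 2 = 0 then v+1 else v := by
        intro m h2m hm
        by_cases hpar : m % 2 = 0
        · have e : i+m = i+2+2*((m-2)/2) := by omega
          rw [e, if_pos hpar]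
          exact (hmid ((m-2)/2) (by omega)).1
        · have e : i+m = i+3+2*((m-3)/2) := by omega
          rw [e, if_neg hpar]
          exact (hmid ((m-3)/2) (by omega)).2
      -- the boundary u = i+2k+1, with w u = v, w (u+1) = v+1
      have hu0 : w (i+2*k+1) = v := by
        have := hmidval (2*k+1) (by omega) (by omega)
        rw [if_neg (by omega)] at this
        have e : i+2*k+1 = i+(2*k+1) := by omega
        rw [e]; exact this
      -- value of wpadL at t ≤ 2k
      have hLval : ∀ t, t ≤ 2*k → wpadL w v (i+2*k+1) t = w (i+(2*k-t)) := by
        intro t ht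
        unfold wpadL
        rw [if_pos (by omega : t < i+2*k+1)]
        congr 1
        omega
      have hLmem : ∀ t, t ≤ 2*k → wpadL w v (i+2*k+1) t = v ∨ wpadL w v (i+2*k+1) t = v+1 := by
        intro t ht
        rw [hLval t ht]
        exact hmem _ (by omega)
      have hRval : ∀ t, i+2*k+3+t < n → wpadR n w v (i+2*k+1) t = w (i+2*k+3+t) := by
        intro t ht
        unfold wpadR
        rw [if_pos (by omega : i+2*k+1+2+t < n)]
      have hRpad : ∀ t, ¬ (i+2*k+3+t < n) → wpadR n w v (i+2*k+1) t = v + 2 := by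
        intro t ht
        unfold wpadR
        rw [if_neg (by omega)]
      by_cases hT : ∃ t, t ≤ 2*k ∧ wpadL w v (i+2*k+1) t ≠ wpadR n w v (i+2*k+1) t
      · -- mismatch case
        obtain ⟨t0, ht2k, hne, hmineq⟩ :
            ∃ t0, t0 ≤ 2*k ∧ (wpadL w v (i+2*k+1) t0 ≠ wpadR n w v (i+2*k+1) t0) ∧
              ∀ s, s < t0 → wpadL w v (i+2*k+1) s = wpadR n w v (i+2*k+1) s := by
          refine ⟨Nat.find hT, (Nat.find_spec hT).1, (Nat.find_spec hT).2, ?_⟩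
          intro s hs
          have h9 := Nat.find_min hT hs
          push_neg at h9
          exact h9 (by
            have := (Nat.find_spec hT).1
            omega)
        rcases lt_trichotomy (wpadL w v (i+2*k+1) t0) (wpadR n w v (i+2*k+1) t0) with hLR | hEQ | hRL
        · exact hnv.1 (i+2*k+1) (by omega) hu0 (by
            show w (i+2*k+1+1) = v+1
            have e : i+2*k+1+1 = i+2*k+2 := by omega
            rw [e]; exact h2) ⟨t0, hmineq, hLR⟩
        · exact hne hEQ
        · -- wpadR t0 < wpadL t0 : gives mirrored factor
          have hRreal : i+2*k+3+t0 < n := by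
            by_contra hcon
            have := hRpad t0 hcon
            rcases hLmem t0 ht2k with h | h <;> omega
          have hRv : w (i+2*k+3+t0) = v ∧ wpadL w v (i+2*k+1) t0 = v+1 := by
            rw [hRval t0 hRreal] at hRL
            rcases hLmem t0 ht2k with h | h <;>
              rcases hmem (i+2*k+3+t0) (by omega) with h' | h' <;>
                (constructor <;> omega)
          -- t0 is even, 2 ≤ t0 ≤ 2k-2
          have ht0ne0 : t0 ≠ 0 := by
            intro h00
            apply hne
            rw [h00, hLval 0 (by omega), hRval 0 (by omega : i+2*k+3+0 < n)]
            have hA := hmidval (2*k) (by omega) (by omega)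
            rw [if_pos (by omega)] at hA
            have e1 : i+(2*k-0) = i+2*k := by omega
            have e2 : i+2*k+3+0 = i+2*k+3 := by omega
            rw [e1, e2, hA, h3]
          have ht0par : t0 % 2 = 0 ∧ 2 ≤ t0 ∧ t0 ≤ 2*k-2 := by
            have hL := hRv.2
            rw [hLval t0 ht2k] at hL
            by_cases hc : 2 ≤ 2*k-t0
            · have := hmidval (2*k-t0) hc (by omega)
              by_cases hpar : (2*k-t0) % 2 = 0
              · rw [if_pos hpar] at this; omega
              · rw [if_neg hpar] at this; omega
            · have h01 : 2*k - t0 = 0 ∨ 2*k - t0 = 1 := by omega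
              rcases h01 with h01 | h01
              · have e : i+(2*k-t0) = i := by omega
                rw [e] at hL; omega
              · have e : i+(2*k-t0) = i+1 := by omega
                rw [e] at hL; omega
          -- values matched before t0
          have hvalpre : ∀ s_, s_ < t0 → w (i+2*k+3+s_) = w (i+(2*k-s_)) := by
            intro s_ hs
            have heqs := hmineq s_ hs
            have hsreal : i+2*k+3+s_ < n := by
              by_contra hcon
              have := hRpad s_ hcon
              rcases hLmem s_ (by omega) with h | h <;> omega
            rw [hLval s_ (by omega), hRval s_ hsreal] at heqs
            omega
          -- Factor11 at j := i+2k+2 with k' := (t0-2)/2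
          have hf11 : Factor11 ((t0-2)/2) n w v (i+2*k+2) := by
            refine ⟨by omega, h2, h3, ?_, ?_, ?_⟩
            · intro s hs
              constructor
              · have e : i+2*k+2+2+2*s = i+2*k+3+(1+2*s) := by omega
                rw [e, hvalpre (1+2*s) (by omega)]
                have := hmidval (2*k-(1+2*s)) (by omega) (by omega)
                rw [if_neg (by omega)] at this
                exact this
              · have e : i+2*k+2+3+2*s = i+2*k+3+(2+2*s) := by omega
                rw [e, hvalpre (2+2*s) (by omega)]
                have := hmidval (2*k-(2+2*s)) (by omega) (by omega)
                rw [if_pos (by omega)] at this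
                exact this
            · have e : i+2*k+2+2*((t0-2)/2)+2 = i+2*k+3+(t0-1) := by omega
              rw [e, hvalpre (t0-1) (by omega)]
              have := hmidval (2*k-(t0-1)) (by omega) (by omega)
              rw [if_neg (by omega)] at this
              exact this
            · have e : i+2*k+2+2*((t0-2)/2)+3 = i+2*k+3+t0 := by omega
              rw [e]
              exact hRv.1
          exact IH ((t0-2)/2) (by omega) n (fun x => w (n-1-x)) v
            (fun j hj => hmem (n-1-j) (by omega))
            (noViol_rev n w v hnv) _
            (factor11_rev _ n w v _ hf11)
      · -- matched case : mirrored factor with k-1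
        push_neg at hT
        have hreal : ∀ t, t ≤ 2*k → i+2*k+3+t < n := by
          intro t ht
          by_contra hcon
          have h5 := hRpad t hcon
          have h6 := hT t ht
          rcases hLmem t ht with h | h <;> omega
        have hval : ∀ t, t ≤ 2*k → w (i+2*k+3+t) = w (i+(2*k-t)) := by
          intro t ht
          have h6 := hT t ht
          rw [hLval t ht, hRval t (hreal t ht)] at h6
          omega
        have hf11 : Factor11 (k-1) n w v (i+2*k+2) := by
          refine ⟨?_, h2, h3, ?_, ?_, ?_⟩
          · have := hreal (2*k) (by omega); omega
          · intro s hs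
            constructor
            · have e : i+2*k+2+2+2*s = i+2*k+3+(1+2*s) := by omega
              rw [e, hval (1+2*s) (by omega)]
              have := hmidval (2*k-(1+2*s)) (by omega) (by omega)
              rw [if_neg (by omega)] at this
              exact this
            · have e : i+2*k+2+3+2*s = i+2*k+3+(2+2*s) := by omega
              rw [e, hval (2+2*s) (by omega)]
              have := hmidval (2*k-(2+2*s)) (by omega) (by omega)
              rw [if_pos (by omega)] at this
              exact this
          · have e : i+2*k+2+2*(k-1)+2 = i+2*k+3+(2*k-1) := by omega
            rw [e, hval (2*k-1) (by omega)]
            have e2 : i+(2*k-(2*k-1)) = i+1 := by omega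
            rw [e2]; exact h1
          · have e : i+2*k+2+2*(k-1)+3 = i+2*k+3+(2*k) := by omega
            rw [e, hval (2*k) (by omega)]
            have e2 : i+(2*k-2*k) = i := by omega
            rw [e2]; exact h0
        exact IH (k-1) (by omega) n (fun x => w (n-1-x)) v
          (fun j hj => hmem (n-1-j) (by omega))
          (noViol_rev n w v hnv) _
          (factor11_rev _ n w v _ hf11)

lemma no_both_ordered (n : ℕ) (w : ℕ → ℤ) (v : ℤ)
    (hmem : ∀ j < n, w j = v ∨ w j = v+1) (hnv : NoViol n w v)
    (i0 j0 : ℕ) (hij : i0 < j0) (hj0 : j0 + 1 < n)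
    (h00a : w i0 = v) (h00b : w (i0+1) = v)
    (h11a : w j0 = v+1) (h11b : w (j0+1) = v+1) : False := by
  classical
  have hQ : ∃ m, ∃ i, w i = v ∧ w (i+1) = v ∧ w (i+m) = v+1 ∧ w (i+m+1) = v+1 ∧ i+m+1 < n := by
    refine ⟨j0 - i0, i0, h00a, h00b, ?_, ?_, by omega⟩
    · have e : i0 + (j0 - i0) = j0 := by omega
      rw [e]; exact h11a
    · have e : i0 + (j0 - i0) + 1 = j0 + 1 := by omega
      rw [e]; exact h11b
  obtain ⟨m0, hm0, hm0min⟩ : ∃ m0, (∃ i, w i = v ∧ w (i+1) = v ∧ w (i+m0) = v+1 ∧ w (i+m0+1) = v+1 ∧ i+m0+1 < n) ∧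
      ∀ m' < m0, ¬ (∃ i, w i = v ∧ w (i+1) = v ∧ w (i+m') = v+1 ∧ w (i+m'+1) = v+1 ∧ i+m'+1 < n) :=
    ⟨Nat.find hQ, Nat.find_spec hQ, fun m' hm' => Nat.find_min hQ hm'⟩
  obtain ⟨i, ha, hb, hc, hd, he⟩ := hm0
  have hm02 : 2 ≤ m0 := by
    by_contra hcon
    have h0 : m0 = 0 ∨ m0 = 1 := by omega
    rcases h0 with h0 | h0
    · rw [h0] at hc
      have e : i + 0 = i := by omega
      rw [e] at hc; omega
    · rw [h0] at hc
      rw [hb] at hc; omega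
  have halt : ∀ m, 2 ≤ m → m ≤ m0 → w (i+m) = (if m % 2 = 0 then v+1 else v) := by
    intro m
    induction m using Nat.strong_induction_on with
    | _ m IHm =>
      intro h2m hmm0
      have hprev : w (i+(m-1)) = (if (m-1) % 2 = 0 then v+1 else v) := by
        by_cases hm2 : m = 2
        · rw [if_neg (by omega)]
          have e : i+(m-1) = i+1 := by omega
          rw [e]; exact hb
        · exact IHm (m-1) (by omega) (by omega) (by omega)
      rcases hmem (i+m) (by omega) with hv | hv
      · -- w (i+m) = v
        by_cases hpar : m % 2 = 0
        · -- bad case : 00 at (i+m-1, i+m)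
          exfalso
          rw [if_neg (by omega)] at hprev
          by_cases hmeq : m = m0
          · rw [hmeq] at hv; omega
          · apply hm0min (m0-(m-1)) (by omega)
            refine ⟨i+(m-1), hprev, ?_, ?_, ?_, by omega⟩
            · have e : i+(m-1)+1 = i+m := by omega
              rw [e]; exact hv
            · have e : i+(m-1)+(m0-(m-1)) = i+m0 := by omega
              rw [e]; exact hc
            · have e : i+(m-1)+(m0-(m-1))+1 = i+m0+1 := by omega
              rw [e]; exact hd
        · rw [if_neg hpar]; exact hv
      · -- w (i+m) = v+1
        by_cases hpar : m % 2 = 0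
        · rw [if_pos hpar]; exact hv
        · -- bad case : 11 at (i+m-1, i+m)
          exfalso
          rw [if_pos (by omega)] at hprev
          apply hm0min (m-1) (by omega)
          refine ⟨i, ha, hb, hprev, ?_, by omega⟩
          have e : i+(m-1)+1 = i+m := by omega
          rw [e]; exact hv
  have hm0even : m0 % 2 = 0 := by
    by_contra hcon
    have h5 := halt m0 hm02 (le_refl m0)
    rw [if_neg hcon] at h5
    omega
  have hfac : Factor00 ((m0-2)/2) n w v i := by
    refine ⟨by omega, ha, hb, ?_, ?_, ?_⟩
    · intro s hs
      constructor
      · have h5 := halt (2+2*s) (by omega) (by omega)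
        rw [if_pos (by omega)] at h5
        have e : i+2+2*s = i+(2+2*s) := by omega
        rw [e]; exact h5
      · have h5 := halt (3+2*s) (by omega) (by omega)
        rw [if_neg (by omega)] at h5
        have e : i+3+2*s = i+(3+2*s) := by omega
        rw [e]; exact h5
    · have e : i+2*((m0-2)/2)+2 = i+m0 := by omega
      rw [e]; exact hc
    · have e : i+2*((m0-2)/2)+3 = i+m0+1 := by omega
      rw [e]; exact hd
  exact comb ((m0-2)/2) n w v hmem hnv i hfac

lemma no_both (n : ℕ) (w : ℕ → ℤ) (v : ℤ)
    (hmem : ∀ j < n, w j = v ∨ w j = v+1) (hnv : NoViol n w v)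
    (i0 j0 : ℕ) (hi0 : i0 + 1 < n) (hj0 : j0 + 1 < n)
    (h00a : w i0 = v) (h00b : w (i0+1) = v)
    (h11a : w j0 = v+1) (h11b : w (j0+1) = v+1) : False := by
  rcases lt_trichotomy i0 j0 with h | h | h
  · exact no_both_ordered n w v hmem hnv i0 j0 h hj0 h00a h00b h11a h11b
  · rw [h] at h00a; omega
  · apply no_both_ordered n (fun x => w (n-1-x)) v
      (fun j hj => hmem (n-1-j) (by omega)) (noViol_rev n w v hnv)
      (n-2-i0) (n-2-j0) (by omega) (by omega)
    · show w (n-1-(n-2-i0)) = v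
      have e : n-1-(n-2-i0) = i0+1 := by omega
      rw [e]; exact h00b
    · show w (n-1-(n-2-i0+1)) = v
      have e : n-1-(n-2-i0+1) = i0 := by omega
      rw [e]; exact h00a
    · show w (n-1-(n-2-j0)) = v+1
      have e : n-1-(n-2-j0) = j0+1 := by omega
      rw [e]; exact h11b
    · show w (n-1-(n-2-j0+1)) = v+1
      have e : n-1-(n-2-j0+1) = j0 := by omega
      rw [e]; exact h11a


/-- Proposition 5.1(i) (partly): if `(r-1) ∤ (s-1)`, `g ≡ s-1 mod (r-1)` is the least
positive residue, `d ∈ Biv*(s,r)` (entries in `{[q], [q]+1}`, summing to `s-1`, first and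
last entries `[q]`) with `h_p(δ⁻¹(d)) = min h_p`, and `2g ≥ r-1`, then `η_max(d) = 1`:
every maximal `[q]`-block of `d` is a singleton; hence `d` has exactly `r-g-1` entries
`[q]`, no two adjacent, exactly `g` entries `[q]+1`, and exactly `w = r-g-2` maximal
`[q]+1`-blocks (whose average length is therefore `q₂ = g/(r-g-2)`). -/
theorem stmt11 (p s r : ℕ) (hpp : p.Prime) (hp3 : 3 ≤ p) (hr : 3 ≤ r) (hrs : r < s)
    (hndvd1 : ¬ (r - 1) ∣ (s - 1))
    (g : ℕ) (hgdef : g = (s - 1) % (r - 1)) (hg : r - 1 ≤ 2 * g)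
    (fq : ℤ) (hfq : fq = (((s - 1) / (r - 1) : ℕ) : ℤ))
    (d : ℕ → ℤ)
    (hmem : ∀ j < r - 1, d j = fq ∨ d j = fq + 1)
    (hsum : ∑ j ∈ Finset.range (r - 1), d j = (s : ℤ) - 1)
    (hframe : d 0 = fq ∧ d (r - 2) = fq)
    (hmin : ∀ b : ℕ → ℤ, Admissible s r b → hp p r (deltaInv d) ≤ hp p r b) :
    (∀ i l, IsMaxRun (r - 1) d fq i l → l = 1) ∧
    ((Finset.range (r - 1)).filter (fun j => d j = fq)).card = r - g - 1 ∧
    (∀ j, j + 1 < r - 1 → ¬ (d j = fq ∧ d (j + 1) = fq)) ∧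
    ((Finset.range (r - 1)).filter (fun j => d j = fq + 1)).card = g ∧
    {i | ∃ l, IsMaxRun (r - 1) d (fq + 1) i l}.ncard = r - g - 2 := by
  have hfq1 : 1 ≤ fq := by
    rw [hfq]
    have h1 : 1 ≤ (s-1)/(r-1) := (Nat.one_le_div_iff (by omega)).mpr (by omega)
    exact_mod_cast h1
  have hgub : g < r - 1 := by
    rw [hgdef]; exact Nat.mod_lt _ (by omega)
  have hNat : (r-1) * ((s-1)/(r-1)) + g = s - 1 := by
    rw [hgdef]; exact Nat.div_add_mod _ _
  have hcast : (s:ℤ) - 1 = ((r-1 : ℕ) : ℤ) * fq + (g : ℤ) := by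
    have h2 : (((r-1) * ((s-1)/(r-1)) + g : ℕ) : ℤ) = ((s - 1 : ℕ) : ℤ) := by
      exact_mod_cast congrArg (Nat.cast : ℕ → ℤ) hNat
    push_cast at h2
    rw [hfq]
    push_cast
    omega
  -- cardinality of the fq+1 entries
  have hsum2 : ∑ j ∈ Finset.range (r-1), d j =
      ((r-1 : ℕ) : ℤ) * fq + (((Finset.range (r-1)).filter (fun j => d j = fq+1)).card : ℤ) := by
    have h1 : ∀ j ∈ Finset.range (r-1), d j = fq + (if d j = fq + 1 then 1 else 0) := by
      intro j hj
      rcases hmem j (Finset.mem_range.mp hj) with h | h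
      · rw [if_neg (by omega), h]; ring
      · rw [if_pos h, h]
    rw [Finset.sum_congr rfl h1, Finset.sum_add_distrib, Finset.sum_const, Finset.card_range,
      Finset.sum_boole]
    simp [nsmul_eq_mul]
  have cardQ : ((Finset.range (r-1)).filter (fun j => d j = fq+1)).card = g := by
    have h3 : (((Finset.range (r-1)).filter (fun j => d j = fq+1)).card : ℤ) = (g : ℤ) := by
      rw [hsum] at hsum2
      rw [hcast] at hsum2
      linarith
    exact_mod_cast h3
  have cardv : ((Finset.range (r-1)).filter (fun j => d j = fq)).card = (r-1) - g := by
    have hpart := Finset.card_filter_add_card_filter_not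
      (s := Finset.range (r-1)) (p := fun j => d j = fq)
    have hco : (Finset.range (r-1)).filter (fun j => ¬ d j = fq) =
        (Finset.range (r-1)).filter (fun j => d j = fq+1) := by
      apply Finset.filter_congr
      intro j hj
      rcases hmem j (Finset.mem_range.mp hj) with h | h <;> simp [h] <;> omega
    rw [hco, cardQ, Finset.card_range] at hpart
    omega
  -- the crux : no two adjacent fq entries
  have key00 : ∀ j, j + 1 < r - 1 → ¬ (d j = fq ∧ d (j + 1) = fq) := by
    intro j hj ⟨e1, e2⟩
    -- first find an adjacent pair of (fq+1)'s
    have h11 : ∃ j', j'+1 < r-1 ∧ d j' = fq+1 ∧ d (j'+1) = fq+1 := by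
      by_contra hcon
      push_neg at hcon
      have hinj : ((Finset.range (r-1)).filter (fun j => d j = fq+1)).card ≤
          (((Finset.range (r-1)).filter (fun j => d j = fq)).erase 0).card := by
        apply Finset.card_le_card_of_injOn (fun j => j+1)
        · intro x hx
          simp only [Finset.mem_coe, Finset.mem_filter, Finset.mem_range] at hx
          obtain ⟨hx1, hx2⟩ := hx
          have hxne : x ≠ r - 2 := by
            intro hf; rw [hf] at hx2; rw [hframe.2] at hx2; omega
          have hx1' : x + 1 < r - 1 := by omega
          simp only [Finset.mem_coe, Finset.mem_erase, Finset.mem_filter, Finset.mem_range]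
          refine ⟨by omega, by omega, ?_⟩
          rcases hmem (x+1) (by omega) with h | h
          · exact h
          · exact absurd h (hcon x hx1' hx2)
        · intro a _ b _ hab
          have hab2 : a + 1 = b + 1 := hab
          omega
      rw [cardQ, Finset.card_erase_of_mem, cardv] at hinj
      · omega
      · simp only [Finset.mem_filter, Finset.mem_range]
        exact ⟨by omega, hframe.1⟩
    obtain ⟨j1, hj1, hq1, hq2⟩ := h11
    have hnv := noviol_of_min p s r hp3 hr fq hfq1 d hmem hsum hmin
    exact no_both (r-1) d fq hmem hnv j j1 hj hj1 e1 e2 hq1 hq2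
  refine ⟨?_, ?_, key00, cardQ, ?_⟩
  · -- every maximal fq-run is a singleton
    intro i l hrun
    obtain ⟨hl, hil, hall, _, _⟩ := hrun
    by_contra hcon
    have hl2 : 2 ≤ l := by omega
    apply key00 i (by omega)
    constructor
    · have := hall 0 (by omega)
      rwa [Nat.add_zero] at this
    · exact hall 1 (by omega)
  · -- fq=cardv part
    rw [cardv]; omega
  · -- number of maximal (fq+1)-runs
    classical
    set F := (Finset.range (r-1)).filter (fun j => 0 < j ∧ d j = fq+1 ∧ d (j-1) = fq) with hF
    have hSF : {i | ∃ l, IsMaxRun (r - 1) d (fq + 1) i l} = (↑F : Set ℕ) := by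
      ext i
      simp only [Set.mem_setOf_eq, Finset.coe_filter, Set.mem_setOf_eq, Finset.mem_range, hF,
        Finset.mem_coe, Finset.mem_filter]
      constructor
      · rintro ⟨l, hl, hil, hall, hleft, hright⟩
        have hd0 : d i = fq + 1 := by
          have := hall 0 hl
          rwa [Nat.add_zero] at this
        have hipos : 0 < i := by
          rcases Nat.eq_zero_or_pos i with h | h
          · rw [h] at hd0; rw [hframe.1] at hd0; omega
          · exact h
        refine ⟨by omega, hipos, hd0, ?_⟩
        have h5 := hleft hipos
        rcases hmem (i-1) (by omega) with h | h
        · exact h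
        · exact absurd h h5
      · rintro ⟨hi, hipos, hdQ, hdprev⟩
        have hex : ∃ l, ¬ (i + l < r - 1 ∧ d (i + l) = fq + 1) := by
          refine ⟨r - 1 - i, ?_⟩
          rw [not_and]
          intro hcon
          omega
        obtain ⟨l0, hlspec, hlmin⟩ :
            ∃ l0, (¬ (i + l0 < r - 1 ∧ d (i + l0) = fq + 1)) ∧
              ∀ k, k < l0 → (i + k < r - 1 ∧ d (i + k) = fq + 1) := by
          refine ⟨Nat.find hex, Nat.find_spec hex, ?_⟩
          intro k hk
          have h6 := Nat.find_min hex hk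
          push_neg at h6
          exact h6
        have hl0pos : 0 < l0 := by
          rcases Nat.eq_zero_or_pos l0 with h | h
          · exfalso
            rw [h] at hlspec
            exact hlspec ⟨by omega, by rwa [Nat.add_zero]⟩
          · exact h
        refine ⟨l0, hl0pos, ?_, ?_, ?_, ?_⟩
        · have := (hlmin (l0-1) (by omega)).1
          omega
        · intro k hk
          exact (hlmin k hk).2
        · intro _
          rw [hdprev]
          omega
        · intro h7
          exact fun hd => hlspec ⟨h7, hd⟩
    rw [hSF, Set.ncard_coe_finset]
    -- biject F with fq-positions below r-2
    have hGF : ((Finset.range (r-2)).filter (fun j => d j = fq)).card = F.card := by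
      apply Finset.card_bij' (fun j _ => j + 1) (fun j _ => j - 1)
      · intro a ha
        show a + 1 - 1 = a
        omega
      · intro a ha
        rw [hF] at ha
        simp only [Finset.mem_filter, Finset.mem_range] at ha
        show a - 1 + 1 = a
        omega
      · intro a ha
        simp only [Finset.mem_filter, Finset.mem_range] at ha
        obtain ⟨ha1, ha2⟩ := ha
        have hQ : d (a+1) = fq + 1 := by
          rcases hmem (a+1) (by omega) with h | h
          · exact absurd ⟨ha2, h⟩ (key00 a (by omega))
          · exact h
        show a + 1 ∈ F
        rw [hF, Finset.mem_filter]
        refine ⟨Finset.mem_range.mpr (by omega), by omega, hQ, ?_⟩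
        simpa using ha2
      · intro a ha
        rw [hF] at ha
        simp only [Finset.mem_filter, Finset.mem_range] at ha
        show a - 1 ∈ (Finset.range (r-2)).filter (fun j => d j = fq)
        rw [Finset.mem_filter, Finset.mem_range]
        have hane : a ≠ r - 2 := by
          intro hcon
          have h9 := ha.2.2.1
          rw [hcon, hframe.2] at h9
          omega
        exact ⟨by omega, ha.2.2.2⟩
    rw [← hGF]
    -- card over range (r-2) = card over range (r-1) minus one (position r-2 hosts fq)
    have hsplitcard : ((Finset.range (r-1)).filter (fun j => d j = fq)).card =
        ((Finset.range (r-2)).filter (fun j => d j = fq)).card + 1 := by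
      have e : r - 1 = (r-2) + 1 := by omega
      rw [e, Finset.range_add_one, Finset.filter_insert, if_pos hframe.2,
        Finset.card_insert_of_notMem]
      intro hcon
      have := Finset.mem_of_mem_filter _ hcon
      simp only [Finset.mem_range] at this
      omega
    rw [cardv] at hsplitcard
    omega
end
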